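/- arXiv:2310.03875 — 7 statements merged into one kernel-verified Lean document; each statement's English description precedes it below -/
import Mathlib

section
/- Let X be a second-countable topological space, W ⊆ X open and 𝒰 an open cover of W. Given Borel measures μ_U on each U ∈ 𝒰 satisfying the compatibility condition μ_U|_{U∩V} = μ_V|_{U∩V} for all U, V ∈ 𝒰, there exists a Borel measure μ on W such that μ|_U = μ_U for all U ∈ 𝒰. -/
open MeasureTheory Set

/-- Restriction of a Borel measure on `U` to an open subset `V ⊆ U`. -/
noncomputable def restrictMeas {X : Type*} [MeasurableSpace X]
    {U V : Set X} (h : V ⊆ U) (μ : Measure U) : Measure V :=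
  Measure.comap (Set.inclusion h) μ

lemma inclusion_image_preimage {X : Type*} {U V : Set X} (h : V ⊆ U)
    {r : Set X} (hrV : r ⊆ V) :
    Set.inclusion h '' (Subtype.val ⁻¹' r) = (Subtype.val ⁻¹' r : Set U) := by
  ext ⟨x, hxU⟩
  simp only [mem_image, mem_preimage]
  constructor
  · rintro ⟨⟨y, hyV⟩, hy, hEq⟩
    have : y = x := congrArg Subtype.val hEq
    subst this; exact hy
  · intro hx
    exact ⟨⟨x, hrV hx⟩, hx, rfl⟩

lemma restrictMeas_apply_preimage {X : Type*} [MeasurableSpace X] {U V : Set X}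
    (h : V ⊆ U) (hV : MeasurableSet V) (μ : Measure U) {r : Set X}
    (hr : MeasurableSet r) (hrV : r ⊆ V) :
    restrictMeas h μ (Subtype.val ⁻¹' r) = μ (Subtype.val ⁻¹' r) := by
  rw [restrictMeas, Measure.comap_apply _ (Set.inclusion_injective h)
      (fun s hs => MeasurableSet.image_inclusion h hV hs) _ (hr.preimage measurable_subtype_coe),
    inclusion_image_preimage h hrV]

/-- Gluing: on a second-countable space, a compatible family of Borel measures on the members
of an open cover of an open set `W` glues to a Borel measure on `W`. -/
theorem stmt2 {X : Type*} [TopologicalSpace X] [SecondCountableTopology X]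
    [MeasurableSpace X] [BorelSpace X]
    (W : Set X) (hW : IsOpen W) (𝒰 : Set (Set X))
    (hopen : ∀ U ∈ 𝒰, IsOpen U) (hsub : ∀ U ∈ 𝒰, U ⊆ W) (hcov : W ⊆ ⋃₀ 𝒰)
    (μf : ∀ U, U ∈ 𝒰 → Measure U)
    (hcompat : ∀ U V (hU : U ∈ 𝒰) (hV : V ∈ 𝒰),
      restrictMeas (inter_subset_left : U ∩ V ⊆ U) (μf U hU) =
        restrictMeas (inter_subset_right : U ∩ V ⊆ V) (μf V hV)) :
    ∃ μ : Measure W, ∀ U (hU : U ∈ 𝒰), restrictMeas (hsub U hU) μ = μf U hU := by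
  classical
  have hm : ∀ U ∈ 𝒰, MeasurableSet U := fun U hU => (hopen U hU).measurableSet
  -- agreement of the pushforwards on common measurable subsets
  have hagree : ∀ (A B : Set X) (hA : A ∈ 𝒰) (hB : B ∈ 𝒰) (r : Set X),
      MeasurableSet r → r ⊆ A ∩ B →
      (μf A hA).map Subtype.val r = (μf B hB).map Subtype.val r := by
    intro A B hA hB r hr hrAB
    have hABm : MeasurableSet (A ∩ B) := (hm A hA).inter (hm B hB)
    rw [Measure.map_apply measurable_subtype_coe hr,
      Measure.map_apply measurable_subtype_coe hr,
      ← restrictMeas_apply_preimage (inter_subset_left : A ∩ B ⊆ A) hABm (μf A hA) hr hrAB,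
      ← restrictMeas_apply_preimage (inter_subset_right : A ∩ B ⊆ B) hABm (μf B hB) hr hrAB,
      hcompat A B hA hB]
  rcases eq_empty_or_nonempty W with rfl | hWne
  · refine ⟨0, fun U hU => ?_⟩
    have hUe : U = ∅ := eq_empty_of_subset_empty (hsub U hU)
    subst hUe
    refine Measure.ext fun s hs => ?_
    have : s = ∅ := eq_empty_of_isEmpty s
    subst this
    simp
  · obtain ⟨T, hTc, hT𝒰, hTU⟩ := TopologicalSpace.isOpen_sUnion_countable 𝒰 hopen
    have hTne : T.Nonempty := by
      obtain ⟨x, hx⟩ := hWne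
      obtain ⟨t, ht, -⟩ := (hTU ▸ hcov : W ⊆ ⋃₀ T) hx
      exact ⟨t, ht⟩
    obtain ⟨f, rfl⟩ := hTc.exists_eq_range hTne
    have hmem : ∀ n, f n ∈ 𝒰 := fun n => hT𝒰 ⟨n, rfl⟩
    set E : ℕ → Set X := disjointed f with hE
    have hEm : ∀ n, MeasurableSet (E n) :=
      MeasurableSet.disjointed fun n => hm (f n) (hmem n)
    have hcovW : W ⊆ ⋃ n, f n := by
      intro x hx
      have hx' : x ∈ ⋃₀ range f := (hTU ▸ hcov : W ⊆ ⋃₀ range f) hx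
      rwa [sUnion_range] at hx'
    set μX : Measure X :=
      Measure.sum (fun n => ((μf (f n) (hmem n)).map Subtype.val).restrict (E n)) with hμX
    -- key claim: μX agrees with the pushforward of μf U on measurable subsets of U
    have hkey : ∀ U (hU : U ∈ 𝒰) (t : Set X), MeasurableSet t → t ⊆ U →
        μX t = (μf U hU).map Subtype.val t := by
      intro U hU t ht htU
      rw [hμX, Measure.sum_apply _ ht]
      have h1 : ∀ n, ((μf (f n) (hmem n)).map Subtype.val).restrict (E n) t
          = (μf U hU).map Subtype.val (t ∩ E n) := by
        intro n
        rw [Measure.restrict_apply ht]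
        exact hagree (f n) U (hmem n) hU (t ∩ E n) (ht.inter (hEm n))
          (subset_inter ((inter_subset_right).trans (disjointed_subset f n)) (inter_subset_left.trans htU))
      rw [tsum_congr h1]
      have hdisj : Pairwise (Function.onFun Disjoint fun n => t ∩ E n) :=
        fun n m hnm => ((disjoint_disjointed f hnm).mono inter_subset_right inter_subset_right)
      rw [← measure_iUnion hdisj fun n => ht.inter (hEm n)]
      congr 1
      rw [← inter_iUnion, hE, iUnion_disjointed]
      exact inter_eq_left.mpr fun x hx => hcovW (hsub U hU (htU hx))
    refine ⟨Measure.comap Subtype.val μX, fun U hU => ?_⟩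
    refine Measure.ext fun s hs => ?_
    have hUm := hm U hU
    have hWm := hW.measurableSet
    rw [restrictMeas, Measure.comap_apply _ (Set.inclusion_injective (hsub U hU))
        (fun u hu => MeasurableSet.image_inclusion (hsub U hU) hUm hu) _ hs,
      Measure.comap_apply _ Subtype.val_injective (fun u hu => hWm.subtype_image hu) _
        (MeasurableSet.image_inclusion (hsub U hU) hUm hs)]
    have himg : (Subtype.val '' (Set.inclusion (hsub U hU) '' s)) = Subtype.val '' s := by
      rw [← image_comp]
      rfl
    rw [himg, hkey U hU _ (hUm.subtype_image hs) (by rintro x ⟨⟨y, hy⟩, -, rfl⟩; exact hy),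
      Measure.map_apply measurable_subtype_coe (hUm.subtype_image hs),
      preimage_image_eq s Subtype.val_injective]
end

section
/- Let X be a second-countable locally compact Hausdorff space, W ⊆ X open, and 𝒰 an open cover of W. Given regular Borel measures μ_U on each U ∈ 𝒰 (regular meaning inner regular, outer regular and finite on compact sets) satisfying μ_U|_{U∩V} = μ_V|_{U∩V} for all U, V ∈ 𝒰, the unique Borel measure μ on W with μ|_U = μ_U for all U ∈ 𝒰 is itself regular; in particular μ is finite on compact subsets of W. -/
open MeasureTheory Set

lemma comap_inclusion_apply {X : Type*} [MeasurableSpace X] {U V : Set X}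
    (hU : MeasurableSet U) (hV : MeasurableSet V) (h : V ⊆ U) (μ : Measure U)
    {s : Set V} (hs : MeasurableSet s) :
    restrictMeas h μ s = μ (Set.inclusion h '' s) := by
  apply Measure.comap_apply₀
  · exact Set.inclusion_injective h
  · intro t ht
    have h1 : MeasurableSet (Subtype.val '' t) :=
      (MeasurableEmbedding.subtype_coe hV).measurableSet_image.2 ht
    have h2 : Set.inclusion h '' t = (Subtype.val : U → X) ⁻¹' (Subtype.val '' t) := by
      ext ⟨x, hx⟩
      simp only [Set.mem_image, Set.mem_preimage]
      constructor
      · rintro ⟨⟨y, hy⟩, hyt, heq⟩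
        have hyx : y = x := congrArg Subtype.val heq
        subst hyx
        exact ⟨⟨y, hy⟩, hyt, rfl⟩
      · rintro ⟨⟨y, hy⟩, hyt, hyx⟩
        exact ⟨⟨y, hy⟩, hyt, Subtype.ext hyx⟩
    rw [h2]
    exact (measurable_subtype_coe h1).nullMeasurableSet
  · exact hs.nullMeasurableSet

/-- On a second-countable locally compact Hausdorff space, a Borel measure on an open set `W`
glued from a compatible family of regular Borel measures on an open cover is itself regular;
in particular it is finite on compact subsets of `W`. -/
theorem stmt4 {X : Type*} [TopologicalSpace X] [SecondCountableTopology X]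
    [T2Space X] [LocallyCompactSpace X] [MeasurableSpace X] [BorelSpace X]
    (W : Set X) (hW : IsOpen W) (𝒰 : Set (Set X))
    (hopen : ∀ U ∈ 𝒰, IsOpen U) (hsub : ∀ U ∈ 𝒰, U ⊆ W) (hcov : W ⊆ ⋃₀ 𝒰)
    (μf : ∀ U, U ∈ 𝒰 → Measure U)
    (hreg : ∀ U (hU : U ∈ 𝒰), (μf U hU).Regular ∧ (μf U hU).InnerRegular)
    (hcompat : ∀ U V (hU : U ∈ 𝒰) (hV : V ∈ 𝒰),
      restrictMeas (inter_subset_left : U ∩ V ⊆ U) (μf U hU) =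
        restrictMeas (inter_subset_right : U ∩ V ⊆ V) (μf V hV))
    (μ : Measure W)
    (hglue : ∀ U (hU : U ∈ 𝒰), restrictMeas (hsub U hU) μ = μf U hU) :
    μ.Regular ∧ μ.InnerRegular ∧ ∀ K : Set W, IsCompact K → μ K < ⊤ := by
  have hWlc : LocallyCompactSpace W := hW.locallyCompactSpace
  -- key: μ is finite on compact subsets of V whenever V is a compact subset of some U ∈ 𝒰
  have key : ∀ (V : Set X), IsCompact V → (∀ U ∈ 𝒰, V ⊆ U → True) →
      ∀ U (hU : U ∈ 𝒰), V ⊆ U → μ ((Subtype.val : W → X) ⁻¹' V) < ⊤ := by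
    intro V hV _ U hU hVU
    set t : Set U := (Subtype.val : U → X) ⁻¹' V with ht
    have htc : IsCompact t := by
      rw [Subtype.isCompact_iff]
      have : Subtype.val '' t = V := by
        ext x
        simp only [ht, Set.mem_image, Set.mem_preimage]
        exact ⟨fun ⟨y, hy, hyx⟩ => hyx ▸ hy, fun hx => ⟨⟨x, hVU hx⟩, hx, rfl⟩⟩
      rwa [this]
    have hUm : MeasurableSet U := (hopen U hU).measurableSet
    have hWm : MeasurableSet W := hW.measurableSet
    have htm : MeasurableSet t := measurable_subtype_coe hV.measurableSet
    have hμf : μf U hU t < ⊤ := by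
      haveI := (hreg U hU).1
      exact htc.measure_lt_top
    have heq : Set.inclusion (hsub U hU) '' t = (Subtype.val : W → X) ⁻¹' V := by
      ext ⟨x, hx⟩
      simp only [Set.mem_image, Set.mem_preimage]
      constructor
      · rintro ⟨⟨y, hy⟩, hyt, heq⟩
        have hyx : y = x := congrArg Subtype.val heq
        subst hyx
        exact hyt
      · intro hxV
        exact ⟨⟨x, hVU hxV⟩, hxV, rfl⟩
    have := comap_inclusion_apply hWm hUm (hsub U hU) μ htm
    rw [hglue U hU] at this
    rw [← heq, ← this]
    exact hμf
  have hfin : IsFiniteMeasureOnCompacts μ := by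
    constructor
    intro K hK
    -- image of K in X is compact
    have hK' : IsCompact (Subtype.val '' K) := hK.image continuous_subtype_val
    have hKW : Subtype.val '' K ⊆ W := by
      rintro x ⟨⟨y, hy⟩, _, rfl⟩; exact hy
    -- for each x in image, choose a compact nbhd inside some U ∈ 𝒰
    have hchoice : ∀ x ∈ Subtype.val '' K, ∃ (V : Set X) (U : Set X) (hU : U ∈ 𝒰),
        IsCompact V ∧ x ∈ interior V ∧ V ⊆ U := by
      intro x hx
      obtain ⟨U, hU, hxU⟩ := hcov (hKW hx)
      obtain ⟨V, hVc, hxV, hVU⟩ := exists_compact_subset (hopen U hU) hxU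
      exact ⟨V, U, hU, hVc, hxV, hVU⟩
    choose! V Uf hUf hVc hxV hVU using hchoice
    -- extract finite subcover
    obtain ⟨s, hs⟩ := hK'.elim_finite_subcover_image
      (fun x hx => isOpen_interior) (fun x hx => mem_biUnion hx (hxV x hx))
    obtain ⟨hss, hsfin, hcover⟩ := hs
    have hKsub : K ⊆ ⋃ x ∈ s, (Subtype.val : W → X) ⁻¹' V x := by
      intro k hk
      have : (k : X) ∈ ⋃ x ∈ s, interior (V x) := hcover ⟨k, hk, rfl⟩
      obtain ⟨x, hxs, hkx⟩ := mem_iUnion₂.1 this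
      exact mem_iUnion₂.2 ⟨x, hxs, show (k : X) ∈ V x from interior_subset hkx⟩
    refine lt_of_le_of_lt (measure_mono hKsub) (measure_biUnion_lt_top hsfin ?_)
    intro x hxs
    exact key (V x) (hVc x (hss hxs)) (fun _ _ _ => trivial)
      (Uf x) (hUf x (hss hxs)) (hVU x (hss hxs))
  haveI := hfin
  haveI hR : Measure.Regular μ := by infer_instance
  haveI hI : Measure.InnerRegular μ := by infer_instance
  exact ⟨hR, hI, fun K hK => hK.measure_lt_top⟩
end

section
/- Let f : X → Y be a local homeomorphism between second-countable locally compact Hausdorff spaces and μ a regular Borel measure on Y. Then there exists a unique regular Borel measure f*μ on X such that (f*μ)(B) = μ(f(B)) for every Borel subset B ⊆ U whenever U ⊆ X is an open set on which f is injective. -/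
open MeasureTheory Set

/-- `ν` is the (sheaf-theoretic) pullback of `μ` along `f`: on every Borel subset `B` of an
open set `U` on which `f` is injective, `ν B = μ (f '' B)`. -/
def IsPullback {X Y : Type*} [TopologicalSpace X] [TopologicalSpace Y]
    [MeasurableSpace X] [MeasurableSpace Y] (f : X → Y)
    (ν : Measure X) (μ : Measure Y) : Prop :=
  ∀ U : Set X, IsOpen U → Set.InjOn f U →
    ∀ B : Set X, B ⊆ U → MeasurableSet B → ν B = μ (f '' B)

/-- The image of a measurable subset of the source of a partial homeomorphism is measurable. -/
lemma measurableSet_image_of_partialHomeomorph {X Y : Type*} [TopologicalSpace X]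
    [TopologicalSpace Y] [MeasurableSpace X] [BorelSpace X]
    [MeasurableSpace Y] [BorelSpace Y]
    (e : OpenPartialHomeomorph X Y) {S : Set X} (hS : MeasurableSet S) (hSe : S ⊆ e.source) :
    MeasurableSet (e '' S) := by
  have h1 : MeasurableEmbedding (e.source.domRestrict e) :=
    e.isOpenEmbedding_restrict.measurableEmbedding
  have h2 : e '' S = (e.source.domRestrict e) '' (((↑) : e.source → X) ⁻¹' S) := by
    rw [Set.restrict_eq, Set.image_comp, Subtype.image_preimage_coe,
      inter_eq_self_of_subset_right hSe]
  rw [h2]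
  exact h1.measurableSet_image' (measurable_subtype_coe hS)

/-- Pullback of a regular Borel measure along a local homeomorphism between second-countable
locally compact Hausdorff spaces: existence and uniqueness. -/
theorem stmt5 {X Y : Type*} [TopologicalSpace X] [TopologicalSpace Y]
    [SecondCountableTopology X] [SecondCountableTopology Y]
    [T2Space X] [T2Space Y] [LocallyCompactSpace X] [LocallyCompactSpace Y]
    [MeasurableSpace X] [BorelSpace X] [MeasurableSpace Y] [BorelSpace Y]
    (f : X → Y) (hf : IsLocalHomeomorph f) (μ : Measure Y) (hμ : μ.Regular) :
    ∃! ν : Measure X, ν.Regular ∧ IsPullback f ν μ := by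
  haveI : μ.Regular := hμ
  have hfcont : Continuous f := hf.continuous
  rcases isEmpty_or_nonempty X with hX | hX
  · -- X is empty: the zero measure works.
    refine ⟨0, ⟨inferInstance, ?_⟩, ?_⟩
    · intro U _ _ B hBU hB
      rw [Set.eq_empty_of_isEmpty B]
      simp
    · rintro ν' ⟨-, -⟩
      ext s hs
      rw [Set.eq_empty_of_isEmpty s]
      simp
  -- X nonempty: get a countable family of partial homeomorphisms whose sources cover X.
  · choose e he₁ he₂ using hf
    obtain ⟨t, htc, htU⟩ :=
      TopologicalSpace.isOpen_iUnion_countable (fun x => (e x).source)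
        (fun x => (e x).open_source)
    have htuniv : ⋃ x ∈ t, (e x).source = univ := by
      rw [htU]
      exact eq_univ_of_forall fun x => mem_iUnion.2 ⟨x, he₁ x⟩
    have htne : t.Nonempty := by
      rcases hX with ⟨x⟩
      by_contra h
      rw [not_nonempty_iff_eq_empty.1 h] at htuniv
      simp at htuniv
      exact (htuniv ▸ mem_univ x : x ∈ (∅ : Set X))
    obtain ⟨c, hc⟩ := htc.exists_eq_range htne
    set E : ℕ → OpenPartialHomeomorph X Y := fun n => e (c n) with hE
    have hfE : ∀ n, f = ⇑(E n) := fun n => he₂ (c n)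
    have hcov : ⋃ n, (E n).source = univ := by
      rw [← htuniv, hc, biUnion_range]
    -- the disjointified cover
    set U : ℕ → Set X := fun n => (E n).source with hU
    set B : ℕ → Set X := fun n => disjointed U n with hB
    have hUopen : ∀ n, IsOpen (U n) := fun n => (E n).open_source
    have hBmeas : ∀ n, MeasurableSet (B n) :=
      MeasurableSet.disjointed fun n => (hUopen n).measurableSet
    have hBsub : ∀ n, B n ⊆ U n := disjointed_subset U
    have hBdisj : Pairwise (Function.onFun Disjoint B) := disjoint_disjointed U
    have hBcov : ⋃ n, B n = univ := by rw [hB, iUnion_disjointed, ← hcov]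
    -- images of measurable subsets of `U n` are measurable
    have himg : ∀ n (S : Set X), MeasurableSet S → S ⊆ U n → MeasurableSet (f '' S) := by
      intro n S hS hSU
      rw [hfE n]
      exact measurableSet_image_of_partialHomeomorph (E n) hS hSU
    -- the candidate measure
    set m : ℕ → Measure X :=
      fun n => ((μ.restrict (E n).target).map (E n).symm).restrict (B n) with hm
    set ν : Measure X := Measure.sum m with hν
    have hmA : ∀ n (A : Set X), MeasurableSet A → m n A = μ (f '' (A ∩ B n)) := by
      intro n A hA
      have hae : AEMeasurable (E n).symm (μ.restrict (E n).target) :=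
        (E n).continuousOn_symm.aemeasurable (E n).open_target.measurableSet
      rw [hm]
      rw [Measure.restrict_apply hA,
        Measure.map_apply_of_aemeasurable hae ((hA.inter (hBmeas n))),
        Measure.restrict_apply' (E n).open_target.measurableSet]
      have : ⇑(E n).symm ⁻¹' (A ∩ B n) ∩ (E n).target
          = (E n) '' ((E n).source ∩ (A ∩ B n)) := by
        rw [(E n).image_source_inter_eq', inter_comm]
      rw [this, inter_eq_self_of_subset_right (inter_subset_right.trans (hBsub n)), ← hfE n]
    -- the key formula
    have key : ∀ A : Set X, MeasurableSet A → ν A = ∑' n, μ (f '' (A ∩ B n)) := by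
      intro A hA
      rw [hν, Measure.sum_apply _ hA]
      exact tsum_congr fun n => hmA n A hA
    -- injectivity on each `U n`
    have hinjU : ∀ n, Set.InjOn f (U n) := fun n => hfE n ▸ (E n).injOn
    -- ν is a pullback
    have hpull : IsPullback f ν μ := by
      intro V hV hVinj A hAV hA
      rw [key A hA]
      have hAun : f '' A = ⋃ n, f '' (A ∩ B n) := by
        rw [← image_iUnion, ← inter_iUnion, hBcov, inter_univ]
      rw [hAun, measure_iUnion ?_ fun n => himg n _ (hA.inter (hBmeas n)) (inter_subset_right.trans (hBsub n))]
      intro i j hij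
      refine Set.disjoint_image_image fun x hx y hy hxy => ?_
      have : x = y := hVinj (hAV hx.1) (hAV hy.1) hxy
      exact Set.disjoint_left.1 (hBdisj hij) hx.2 (this ▸ hy.2)
    -- any pullback measure satisfies the key formula, giving uniqueness
    have huniq : ∀ ν' : Measure X, IsPullback f ν' μ → ν' = ν := by
      intro ν' hp'
      ext A hA
      have hAeq : A = ⋃ n, A ∩ B n := by rw [← inter_iUnion, hBcov, inter_univ]
      calc ν' A = ν' (⋃ n, A ∩ B n) := by rw [← hAeq]
        _ = ∑' n, ν' (A ∩ B n) := measure_iUnion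
              (fun i j hij => (hBdisj hij).mono inf_le_right inf_le_right)
              (fun n => hA.inter (hBmeas n))
        _ = ∑' n, μ (f '' (A ∩ B n)) := tsum_congr fun n =>
              hp' (U n) (hUopen n) (hinjU n) _
                (inter_subset_right.trans (hBsub n)) (hA.inter (hBmeas n))
        _ = ν A := (key A hA).symm
    -- ν is finite on compact sets, hence regular
    have hfc : IsFiniteMeasureOnCompacts ν := by
      constructor
      intro K hK
      obtain ⟨s, hs⟩ := hK.elim_finite_subcover U hUopen (by rw [hcov]; exact subset_univ K)
      set N : ℕ := s.sup id with hN
      have hzero : ∀ n, N < n → K ∩ B n = ∅ := by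
        intro n hn
        rw [eq_empty_iff_forall_notMem]
        rintro x ⟨hxK, hxB⟩
        obtain ⟨i, his, hxi⟩ := Set.mem_iUnion₂.1 (hs hxK)
        have hiN : i ≤ N := Finset.le_sup (f := id) his
        have hxP : x ∈ partialSups B i := by
          rw [partialSups_disjointed]
          exact le_partialSups U i hxi
        rw [partialSups_eq_biSup] at hxP
        simp only [iSup_eq_iUnion, Set.mem_iUnion] at hxP
        obtain ⟨j, hji, hxj⟩ := hxP
        exact Set.disjoint_left.1 (hBdisj (lt_of_le_of_lt (hji.trans hiN) hn).ne) hxj hxB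
      have hKim : IsCompact (f '' K) := hK.image hfcont
      calc ν K = ∑' n, μ (f '' (K ∩ B n)) := key K hK.measurableSet
        _ = ∑ n ∈ Finset.range (N + 1), μ (f '' (K ∩ B n)) := by
            refine tsum_eq_sum fun n hn => ?_
            have hNn : N < n := by
              by_contra h
              exact hn (Finset.mem_range.2 (by omega))
            rw [hzero n hNn, image_empty, measure_empty]
        _ ≤ ∑ n ∈ Finset.range (N + 1), μ (f '' K) :=
            Finset.sum_le_sum fun n _ => measure_mono (image_mono (f := f) inter_subset_left)
        _ < ⊤ := by
            rw [Finset.sum_const, nsmul_eq_mul]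
            exact ENNReal.mul_lt_top (ENNReal.natCast_lt_top _) hKim.measure_lt_top
    haveI := hfc
    haveI : ν.Regular := inferInstance
    exact ⟨ν, ⟨this, hpull⟩, fun ν' h => huniq ν' h.2⟩
end

section
/- Let φ : X → Y be a local homeomorphism between second-countable locally compact Hausdorff spaces and μ a regular Borel measure on Y. If ν is a regular Borel measure on X satisfying ∫_X f dν = ∫_Y Σ_{x∈φ⁻¹(y)} f(x) dμ(y) for all f ∈ C_c(X), then ν(B) = μ(φ(B)) for every Borel set B contained in an open set U ⊆ X on which φ is injective. In particular the Riesz-representation pullback coincides with the sheaf-theoretic pullback of μ along φ. -/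
open MeasureTheory Set

/-- The Riesz-representation pullback coincides with the sheaf-theoretic pullback: if
`∫ f dν = ∫ Σ_{x ∈ φ⁻¹(y)} f(x) dμ(y)` for all `f ∈ C_c(X)`, then `ν B = μ (φ '' B)` for
every Borel `B` contained in an open set on which `φ` is injective. -/
theorem stmt7 {X Y : Type*} [TopologicalSpace X] [TopologicalSpace Y]
    [SecondCountableTopology X] [SecondCountableTopology Y]
    [T2Space X] [T2Space Y] [LocallyCompactSpace X] [LocallyCompactSpace Y]
    [MeasurableSpace X] [BorelSpace X] [MeasurableSpace Y] [BorelSpace Y]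
    (φ : X → Y) (hφ : IsLocalHomeomorph φ)
    (μ : Measure Y) (hμ : μ.Regular) (ν : Measure X) (hν : ν.Regular)
    (hint : ∀ f : X → ℂ, Continuous f → HasCompactSupport f →
      ∫ x, f x ∂ν = ∫ y, ∑' x : (φ ⁻¹' {y}), f (x : X) ∂μ) :
    IsPullback φ ν μ := by
  haveI := hμ
  haveI := hν
  intro U hU hInj B hBU hB
  rcases eq_empty_or_nonempty U with rfl | hUne
  · have : B = ∅ := subset_empty_iff.mp hBU
    simp [this]
  haveI : Nonempty U := hUne.to_subtype
  have hφc : Continuous φ := hφ.continuous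
  have hφo : IsOpenMap φ := hφ.isOpenMap
  set V : Set Y := φ '' U with hVdef
  have hVo : IsOpen V := hφo U hU
  -- the restriction of φ to U is an open embedding
  set e : U → Y := fun x => φ x with hedef
  have he : Topology.IsOpenEmbedding e :=
    Topology.IsOpenEmbedding.of_continuous_injective_isOpenMap
      (hφc.comp continuous_subtype_val)
      (fun a b h => Subtype.ext (hInj a.2 b.2 h))
      (hφo.comp hU.isOpenMap_subtype_val)
  have hrange : range e = V := by
    ext y
    constructor
    · rintro ⟨x, rfl⟩; exact ⟨x, x.2, rfl⟩
    · rintro ⟨x, hx, rfl⟩; exact ⟨⟨x, hx⟩, rfl⟩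
  -- a continuous partial inverse σ of φ on V
  set P := he.toPartialHomeomorph e with hPdef
  set σ : Y → X := fun y => ((P.symm y : U) : X) with hσdef
  have hσU : ∀ y, σ y ∈ U := fun y => (P.symm y : U).2
  have hσφ : ∀ y ∈ V, φ (σ y) = y := by
    intro y hy
    have : e (P.symm y) = y :=
      he.toPartialHomeomorph_right_inv e (by rw [hrange]; exact hy)
    exact this
  have hσeq : ∀ x ∈ U, σ (φ x) = x := by
    intro x hx
    have : P.symm (e ⟨x, hx⟩) = ⟨x, hx⟩ := he.toPartialHomeomorph_left_inv e
    simp only [hσdef]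
    rw [show φ x = e ⟨x, hx⟩ from rfl, this]
  have hσcont : ContinuousOn σ V := by
    have h1 : ContinuousOn P.symm P.target := P.continuousOn_symm
    have h2 : P.target = V := by
      rw [hPdef, he.toPartialHomeomorph_target, hrange]
    rw [h2] at h1
    exact continuous_subtype_val.comp_continuousOn h1
  -- measurability of images of measurable subsets of U
  have imgMeas : ∀ C : Set X, C ⊆ U → MeasurableSet C → MeasurableSet (φ '' C) := by
    intro C hCU hC
    have himg : φ '' C = e '' (Subtype.val ⁻¹' C) := by
      ext y
      constructor
      · rintro ⟨x, hx, rfl⟩; exact ⟨⟨x, hCU hx⟩, hx, rfl⟩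
      · rintro ⟨x, hx, rfl⟩; exact ⟨(x : X), hx, rfl⟩
    rw [himg]
    exact he.measurableEmbedding.measurableSet_image.2 (hC.preimage measurable_subtype_coe)
  -- the core estimate
  have core : ∀ K W : Set X, IsCompact K → K ⊆ U → IsOpen W → K ⊆ W → W ⊆ U →
      IsCompact (closure W) → ν K ≤ μ (φ '' W) ∧ μ (φ '' K) ≤ ν W := by
    intro K W hK hKU hWo hKW hWU hWc
    obtain ⟨L, hL, hKL, hLW⟩ := exists_compact_between hK hWo hKW
    obtain ⟨f, hf1, hf0, hfc, hf01⟩ :=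
      exists_continuous_one_zero_of_isCompact hK isOpen_interior.isClosed_compl
        (disjoint_compl_right_iff_subset.mpr hKL)
    have hsupp : Function.support f ⊆ interior L := by
      intro x hx
      by_contra h
      exact hx (hf0 h)
    have htsupp : tsupport f ⊆ W := by
      have h1 : tsupport f ⊆ L := closure_minimal (hsupp.trans interior_subset) hL.isClosed
      exact h1.trans hLW
    have htsuppU : tsupport f ⊆ U := htsupp.trans hWU
    set T : Set Y := φ '' tsupport f with hTdef
    have hT : IsCompact T := hfc.image hφc
    have hTV : T ⊆ V := image_mono (f := φ) htsuppU
    set g : Y → ℝ := V.indicator (fun y => f (σ y)) with hgdef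
    have hg0 : ∀ y ∉ T, g y = 0 := by
      intro y hy
      by_cases hyV : y ∈ V
      · rw [hgdef, indicator_of_mem hyV]
        by_contra h
        have : σ y ∈ tsupport f := subset_tsupport _ h
        exact hy ⟨σ y, this, hσφ y hyV⟩
      · exact indicator_of_notMem hyV _
    have hgc : HasCompactSupport g := HasCompactSupport.intro hT hg0
    have hgcont : Continuous g := by
      rw [continuous_iff_continuousAt]
      intro y
      by_cases hyV : y ∈ V
      · have hca : ContinuousAt (fun z => f (σ z)) y :=
          f.continuous.continuousAt.comp (hσcont.continuousAt (hVo.mem_nhds hyV))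
        refine hca.congr <| Filter.eventuallyEq_of_mem (hVo.mem_nhds hyV)
          (fun z hz => ?_)
        show f (σ z) = g z
        rw [hgdef, indicator_of_mem hz]
      · have hyT : y ∉ T := fun h => hyV (hTV h)
        have hmem : Tᶜ ∈ nhds y := hT.isClosed.isOpen_compl.mem_nhds hyT
        exact continuousAt_const.congr <| Filter.eventuallyEq_of_mem hmem
          (fun z hz => (hg0 z hz).symm)
    -- the fiberwise sum of f equals g
    have hsum : ∀ y : Y, (∑' x : (φ ⁻¹' {y}), ((f (x : X) : ℝ) : ℂ)) = ((g y : ℝ) : ℂ) := by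
      intro y
      by_cases hyV : y ∈ V
      · have hx0 : φ (σ y) = y := hσφ y hyV
        set x₀ : (φ ⁻¹' {y}) := ⟨σ y, by simp [hx0]⟩ with hx₀def
        have h0 : ∀ b : (φ ⁻¹' {y}), b ≠ x₀ → ((f (b : X) : ℝ) : ℂ) = 0 := by
          intro b hb
          by_contra h
          have hfb : f (b : X) ≠ 0 := fun h' => h (by rw [h']; simp)
          have hbU : (b : X) ∈ U := htsuppU (subset_tsupport _ hfb)
          have hbeq : (b : X) = σ y := by
            apply hInj hbU (hσU y)
            rw [hx0]
            exact b.2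
          exact hb (Subtype.ext hbeq)
        rw [tsum_eq_single x₀ h0]
        have : g y = f (σ y) := indicator_of_mem hyV _
        rw [this]
      · have h0 : ∀ b : (φ ⁻¹' {y}), ((f (b : X) : ℝ) : ℂ) = 0 := by
          intro b
          have : f (b : X) = 0 := by
            by_contra h
            have hbU : (b : X) ∈ U := htsuppU (subset_tsupport _ h)
            exact hyV ⟨(b : X), hbU, b.2⟩
          simp [this]
        have h1 : (∑' x : (φ ⁻¹' {y}), ((f (x : X) : ℝ) : ℂ)) = 0 := by
          rw [tsum_congr h0]
          exact tsum_zero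
        rw [h1]
        have : g y = 0 := indicator_of_notMem hyV _
        rw [this]
        simp
    -- the integral identity for f and g
    have hfcont : Continuous (fun x => f x) := f.continuous
    have hfC : Continuous (fun x => ((f x : ℝ) : ℂ)) := Complex.continuous_ofReal.comp f.continuous
    have hfCc : HasCompactSupport (fun x => ((f x : ℝ) : ℂ)) := by
      apply hfc.comp_left (g := fun r : ℝ => (r : ℂ))
      simp
    have hintf := hint (fun x => ((f x : ℝ) : ℂ)) hfC hfCc
    have hreal : ∫ x, f x ∂ν = ∫ y, g y ∂μ := by
      have h1 : ∫ x, ((f x : ℝ) : ℂ) ∂ν = ∫ y, ((g y : ℝ) : ℂ) ∂μ := by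
        rw [hintf]
        exact integral_congr_ae (Filter.Eventually.of_forall hsum)
      have e1 : ∫ x, ((f x : ℝ) : ℂ) ∂ν = ((∫ x, f x ∂ν : ℝ) : ℂ) := integral_ofReal
      have e2 : ∫ y, ((g y : ℝ) : ℂ) ∂μ = ((∫ y, g y ∂μ : ℝ) : ℂ) := integral_ofReal
      rw [e1, e2] at h1
      exact_mod_cast h1
    -- integrability
    have hfi : Integrable (fun x => f x) ν := hfcont.integrable_of_hasCompactSupport hfc
    have hgi : Integrable g μ := hgcont.integrable_of_hasCompactSupport hgc
    -- finiteness
    have hνW : ν W ≠ ⊤ := ((measure_mono subset_closure).trans_lt hWc.measure_lt_top).ne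
    have hμW : μ (φ '' W) ≠ ⊤ :=
      ((measure_mono (image_mono (f := φ) subset_closure)).trans_lt
        (hWc.image hφc).measure_lt_top).ne
    have hνK : ν K ≠ ⊤ := hK.measure_lt_top.ne
    have hμK : μ (φ '' K) ≠ ⊤ := (hK.image hφc).measure_lt_top.ne
    -- bounds for f
    have hfK : (ν K).toReal ≤ ∫ x, f x ∂ν := by
      rw [← measureReal_def, ← integral_indicator_one hK.measurableSet]
      apply integral_mono _ hfi
      · intro x
        by_cases hx : x ∈ K
        · rw [indicator_of_mem hx]; exact le_of_eq (hf1 hx).symm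
        · rw [indicator_of_notMem hx]; exact (hf01 x).1
      · rw [integrable_indicator_iff hK.measurableSet]
        exact integrableOn_const hK.measure_lt_top.ne
    have hfW : ∫ x, f x ∂ν ≤ (ν W).toReal := by
      rw [← measureReal_def, ← integral_indicator_one hWo.measurableSet]
      apply integral_mono hfi
      · rw [integrable_indicator_iff hWo.measurableSet]
        exact integrableOn_const hνW
      · intro x
        by_cases hx : x ∈ W
        · rw [indicator_of_mem hx]; exact (hf01 x).2
        · rw [indicator_of_notMem hx]
          have : f x = 0 := by
            by_contra h
            exact hx (htsupp (subset_tsupport _ h))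
          exact le_of_eq this
    -- bounds for g
    have hgK : (μ (φ '' K)).toReal ≤ ∫ y, g y ∂μ := by
      rw [← measureReal_def, ← integral_indicator_one (imgMeas K hKU hK.measurableSet)]
      apply integral_mono _ hgi
      · intro y
        by_cases hy : y ∈ φ '' K
        · rw [indicator_of_mem hy]
          obtain ⟨x, hxK, rfl⟩ := hy
          have hxU : x ∈ U := hKU hxK
          have hyV : φ x ∈ V := ⟨x, hxU, rfl⟩
          have : σ (φ x) = x := hσeq x hxU
          rw [hgdef]
          rw [indicator_of_mem hyV, this]
          exact le_of_eq (hf1 hxK).symm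
        · rw [indicator_of_notMem hy]
          by_cases hyV : y ∈ V
          · rw [hgdef, indicator_of_mem hyV]; exact (hf01 _).1
          · rw [hgdef, indicator_of_notMem hyV]
      · rw [integrable_indicator_iff (imgMeas K hKU hK.measurableSet)]
        exact integrableOn_const hμK
    have hgW : ∫ y, g y ∂μ ≤ (μ (φ '' W)).toReal := by
      rw [← measureReal_def, ← integral_indicator_one (hφo W hWo).measurableSet]
      apply integral_mono hgi
      · rw [integrable_indicator_iff (hφo W hWo).measurableSet]
        exact integrableOn_const hμW
      · intro y
        by_cases hy : y ∈ φ '' W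
        · rw [indicator_of_mem hy]
          by_cases hyV : y ∈ V
          · rw [hgdef, indicator_of_mem hyV]; exact (hf01 _).2
          · rw [hgdef, indicator_of_notMem hyV]; norm_num
        · rw [indicator_of_notMem hy]
          by_cases hyV : y ∈ V
          · rw [hgdef, indicator_of_mem hyV]
            have : f (σ y) = 0 := by
              by_contra h
              have : σ y ∈ W := htsupp (subset_tsupport _ h)
              exact hy ⟨σ y, this, hσφ y hyV⟩
            rw [this]
          · rw [hgdef, indicator_of_notMem hyV]
    constructor
    · have := (hfK.trans hreal.le).trans hgW
      exact (ENNReal.toReal_le_toReal hνK hμW).1 this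
    · have := (hgK.trans hreal.ge).trans hfW
      exact (ENNReal.toReal_le_toReal hμK hνW).1 this
  -- equality on compact subsets of U
  have key : ∀ K : Set X, IsCompact K → K ⊆ U → ν K = μ (φ '' K) := by
    intro K hK hKU
    apply le_antisymm
    · rw [Set.measure_eq_iInf_isOpen (φ '' K) μ]
      refine le_iInf fun S => le_iInf fun hKS => le_iInf fun hSo => ?_
      set W' : Set X := U ∩ φ ⁻¹' S with hW'def
      have hW'o : IsOpen W' := hU.inter (hSo.preimage hφc)
      have hKW' : K ⊆ W' := fun x hx => ⟨hKU hx, hKS (mem_image_of_mem φ hx)⟩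
      obtain ⟨L, hL, hKL, hLW'⟩ := exists_compact_between hK hW'o hKW'
      have hclo : closure (interior L) ⊆ L := closure_minimal interior_subset hL.isClosed
      have hcc : IsCompact (closure (interior L)) :=
        hL.of_isClosed_subset isClosed_closure hclo
      have h := (core K (interior L) hK hKU isOpen_interior hKL
        ((interior_subset.trans hLW').trans inter_subset_left) hcc).1
      refine h.trans (measure_mono ?_)
      intro y hy
      obtain ⟨x, hx, rfl⟩ := hy
      exact (hLW' (interior_subset hx)).2
    · rw [Set.measure_eq_iInf_isOpen K ν]
      refine le_iInf fun S => le_iInf fun hKS => le_iInf fun hSo => ?_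
      set W' : Set X := U ∩ S with hW'def
      have hW'o : IsOpen W' := hU.inter hSo
      have hKW' : K ⊆ W' := fun x hx => ⟨hKU hx, hKS hx⟩
      obtain ⟨L, hL, hKL, hLW'⟩ := exists_compact_between hK hW'o hKW'
      have hclo : closure (interior L) ⊆ L := closure_minimal interior_subset hL.isClosed
      have hcc : IsCompact (closure (interior L)) :=
        hL.of_isClosed_subset isClosed_closure hclo
      have h := (core K (interior L) hK hKU isOpen_interior hKL
        ((interior_subset.trans hLW').trans inter_subset_left) hcc).2
      exact h.trans (measure_mono fun x hx => (hLW' (interior_subset hx)).2)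
  -- conclude via inner regularity
  have hBim : MeasurableSet (φ '' B) := imgMeas B hBU hB
  apply le_antisymm
  · refine le_of_forall_lt fun r hr => ?_
    obtain ⟨K, hKB, hKc, hrK⟩ :=
      MeasureTheory.Measure.InnerRegular.innerRegular (μ := ν) hB r hr
    calc r < ν K := hrK
      _ = μ (φ '' K) := key K hKc (hKB.trans hBU)
      _ ≤ μ (φ '' B) := measure_mono (image_mono (f := φ) hKB)
  · refine le_of_forall_lt fun r hr => ?_
    obtain ⟨Lc, hLB, hLc, hrL⟩ :=
      MeasureTheory.Measure.InnerRegular.innerRegular (μ := μ) hBim r hr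
    have hLV : Lc ⊆ V := hLB.trans (image_mono (f := φ) hBU)
    set K : Set X := σ '' Lc with hKdef
    have hKc : IsCompact K := hLc.image_of_continuousOn (hσcont.mono hLV)
    have hKB : K ⊆ B := by
      rintro x ⟨y, hy, rfl⟩
      obtain ⟨b, hbB, rfl⟩ := hLB hy
      rwa [hσeq b (hBU hbB)]
    have hφK : φ '' K = Lc := by
      ext y
      constructor
      · rintro ⟨x, ⟨z, hz, rfl⟩, rfl⟩
        rwa [hσφ z (hLV hz)]
      · intro hy
        exact ⟨σ y, ⟨y, hy, rfl⟩, hσφ y (hLV hy)⟩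
    calc r < μ Lc := hrL
      _ = ν K := by rw [← hφK, ← key K hKc (hKB.trans hBU)]
      _ ≤ ν B := measure_mono hKB
end

section
/- Let E be a topological graph and K ⊆ E* a compact subset of the finite path space. Then the cylinder set Z(K) = { a ∈ ∂E : a(n) ∈ K for some 0 ≤ n ≤ |a| } is compact in the boundary path space ∂E. -/
open MeasureTheory Set

namespace TopGraph

universe u
variable {V E : Type u} (r s : E → V)

/-- Composability of a tuple of edges: the source of each edge is the range of the next. -/
def Comp (n : ℕ) (a : Fin n → E) : Prop :=
  ∀ i j : Fin n, (j : ℕ) = (i : ℕ) + 1 → s (a i) = r (a j)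

/-- The space `E^n` of paths of length `n`; `E^0` is the vertex space `V`. -/
def PathN : ℕ → Type u
  | 0 => V
  | n + 1 => {a : Fin (n + 1) → E // Comp r s (n + 1) a}

/-- The space `E^∞` of infinite paths. -/
def PathInf : Type u := {a : ℕ → E // ∀ i : ℕ, s (a i) = r (a (i + 1))}

/-- The edges of a finite path. -/
def edgeOf : ∀ {n : ℕ}, PathN r s n → Fin n → E
  | 0, _, i => absurd i.isLt (by omega)
  | _ + 1, q, i => q.1 i

/-- The source of a finite path (for a vertex, the vertex itself). -/
def srcFin : ∀ {n : ℕ}, PathN r s n → V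
  | 0, v => v
  | n + 1, q => s (q.1 ⟨n, Nat.lt_succ_self n⟩)

/-- The range of a finite path (for a vertex, the vertex itself). -/
def rngFin : ∀ {n : ℕ}, PathN r s n → V
  | 0, v => v
  | n + 1, q => r (q.1 ⟨0, Nat.succ_pos n⟩)

/-- Truncation `a ↦ a(n)` of a finite path, with `a(0) = r(a)`. -/
def truncFin : ∀ {m n : ℕ}, n ≤ m → PathN r s m → PathN r s n
  | 0, 0, _, q => q
  | _ + 1, 0, _, q => r (q.1 ⟨0, Nat.succ_pos _⟩)
  | 0, _ + 1, h, _ => absurd h (by omega)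
  | _ + 1, _ + 1, h, q =>
    ⟨fun i => q.1 (Fin.castLE h i), fun i j hij =>
      q.2 (Fin.castLE h i) (Fin.castLE h j) (by simpa using hij)⟩

/-- Truncation `a ↦ a(n)` of an infinite path. -/
def truncInf (a : PathInf r s) : ∀ n : ℕ, PathN r s n
  | 0 => r (a.1 0)
  | n + 1 => ⟨fun i => a.1 i, fun i j hij => by
      show s (a.1 (i : ℕ)) = r (a.1 (j : ℕ))
      rw [hij]
      exact a.2 (i : ℕ)⟩

/-- The finite path space `E* = ⊔ₙ E^n`. -/
def FinPath : Type u := Σ n : ℕ, PathN r s n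

/-- Truncation of a finite path, as a map of `E*`. -/
def ftrunc (p : FinPath r s) (k : ℕ) (h : k ≤ p.1) : FinPath r s :=
  ⟨k, truncFin r s h p.2⟩

section Topology

variable [TopologicalSpace V] [TopologicalSpace E]

instance instTopPathN : ∀ n : ℕ, TopologicalSpace (PathN r s n)
  | 0 => (inferInstance : TopologicalSpace V)
  | n + 1 => (inferInstance : TopologicalSpace {a : Fin (n + 1) → E // Comp r s (n + 1) a})

noncomputable instance instMeasPathN (n : ℕ) : MeasurableSpace (PathN r s n) := borel _

instance instTopPathInf : TopologicalSpace (PathInf r s) :=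
  (inferInstance : TopologicalSpace {a : ℕ → E // ∀ i : ℕ, s (a i) = r (a (i + 1))})

instance instTopFinPath : TopologicalSpace (FinPath r s) :=
  (inferInstance : TopologicalSpace (Σ n : ℕ, PathN r s n))

/-- A vertex is regular if it has a relatively compact open neighborhood `U` with
`r⁻¹(cl U)` compact and `r(r⁻¹(U)) = U`. -/
def RegularVertex (v : V) : Prop :=
  ∃ U : Set V, IsOpen U ∧ v ∈ U ∧ IsCompact (closure U) ∧
    IsCompact (r ⁻¹' closure U) ∧ r '' (r ⁻¹' U) = U

/-- The carrier of the boundary path space: finite or infinite paths. -/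
def BPathCarrier : Type u := FinPath r s ⊕ PathInf r s

/-- Length of a (possibly infinite) path, in `ℕ∞`. -/
def blen : BPathCarrier r s → ℕ∞
  | .inl p => (p.1 : ℕ∞)
  | .inr _ => ⊤

/-- Truncation `a ↦ a(n)` of a boundary path, `n ≤ |a|`, valued in `E*`. -/
def btrunc : ∀ (x : BPathCarrier r s) (n : ℕ), (n : ℕ∞) ≤ blen r s x → FinPath r s
  | .inl p, n, h => ftrunc r s p n (by simpa [blen] using h)
  | .inr a, n, _ => ⟨n, truncInf r s a n⟩

/-- The boundary path space `∂E`: singular finite paths together with infinite paths. -/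
def BPath : Type u :=
  {x : BPathCarrier r s //
    ∀ p : FinPath r s, x = Sum.inl p → ¬ RegularVertex r (srcFin r s p.2)}

/-- The cylinder sets `Z(S) = {a ∈ ∂E : a(n) ∈ S for some n ≤ |a|}`. -/
def ZSet (S : Set (FinPath r s)) : Set (BPath r s) :=
  {x | ∃ (n : ℕ) (h : (n : ℕ∞) ≤ blen r s x.val), btrunc r s x.val n h ∈ S}

/-- The topology on `∂E` generated by the base `{Z(U) \ Z(K) : U open, K compact}`. -/
instance instTopBPath : TopologicalSpace (BPath r s) :=
  TopologicalSpace.generateFrom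
    {A | ∃ (U K : Set (FinPath r s)), IsOpen U ∧ IsCompact K ∧
      A = ZSet r s U \ ZSet r s K}

noncomputable instance instMeasBPath : MeasurableSpace (BPath r s) := borel _

end Topology

/-- The backwards shift on finite paths (acting as the identity on vertices). -/
def shiftF : FinPath r s → FinPath r s
  | ⟨0, v⟩ => ⟨0, v⟩
  | ⟨1, q⟩ => ⟨0, (s (q.1 ⟨0, Nat.one_pos⟩) : PathN r s 0)⟩
  | ⟨n + 2, q⟩ =>
    ⟨n + 1, ⟨fun i => q.1 i.succ, fun i j hij =>
      q.2 i.succ j.succ (by simp [Fin.val_succ, hij])⟩⟩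

/-- The backwards shift on the boundary path carrier. -/
def shiftC : BPathCarrier r s → BPathCarrier r s
  | .inl p => .inl (shiftF r s p)
  | .inr a => .inr ⟨fun i => a.1 (i + 1), fun i => a.2 (i + 1)⟩

section Vertex

variable [TopologicalSpace V] [TopologicalSpace E]

/-- The set of vertices `E⁰ ⊆ ∂E`. -/
def VtxSet : Set (BPath r s) := {x | ∃ v : V, x.val = Sum.inl ⟨0, (v : PathN r s 0)⟩}

/-- The range map `r : ∂E → E⁰`. -/
def brng (x : BPath r s) : V :=
  match x.val with
  | .inl p => rngFin r s p.2
  | .inr a => r (a.1 0)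

end Vertex

section Measures

variable [TopologicalSpace V] [TopologicalSpace E]
variable [MeasurableSpace V] [MeasurableSpace E]

/-- `ν` is the (sheaf-theoretic) pullback of `μ` along `f`. -/
def IsPullback {X Y : Type*} [TopologicalSpace X] [TopologicalSpace Y]
    [MeasurableSpace X] [MeasurableSpace Y] (f : X → Y)
    (ν : Measure X) (μ : Measure Y) : Prop :=
  ∀ U : Set X, IsOpen U → Set.InjOn f U →
    ∀ B : Set X, B ⊆ U → MeasurableSet B → ν B = μ (f '' B)

/-- A measure `ν` on `∂E` is `β`-quasi-invariant: `σ*ν = e^β ν` on `∂E \ E⁰`, i.e.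
`ν(B) = e^{-β} ν(σ(B))` for Borel `B` inside an open set `U ⊆ ∂E \ E⁰` on which `σ`
is injective. -/
def QuasiInv (β : ℝ) (ν : Measure (BPath r s)) : Prop :=
  ∀ U : Set (BPath r s), IsOpen U → Disjoint U (VtxSet r s) →
    Set.InjOn (fun x : BPath r s => shiftC r s x.val) U →
    ∀ B : Set (BPath r s), B ⊆ U → MeasurableSet B →
      ν B = ENNReal.ofReal (Real.exp (-β)) *
        ν (Subtype.val ⁻¹' (shiftC r s '' (Subtype.val '' B)))

/-- A regular Borel measure `μ` on `E⁰` is `β`-sub-invariant: `Tμ ≤ e^β μ` with equality on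
the regular vertices, where `T = r_* s*`. -/
def SubInv (β : ℝ) (μ : Measure V) : Prop :=
  μ.Regular ∧ ∃ sμ : Measure E, sμ.Regular ∧ IsPullback s sμ μ ∧
    Measure.map r sμ ≤ ENNReal.ofReal (Real.exp β) • μ ∧
    ∀ B : Set V, MeasurableSet B → (∀ v ∈ B, RegularVertex r v) →
      Measure.map r sμ B = ENNReal.ofReal (Real.exp β) * μ B

end Measures

section BPathN

variable [TopologicalSpace V] [TopologicalSpace E]

/-- The `n`-th boundary path space `∂Eₙ = E⁰_sng ⊔ ⋯ ⊔ E^{n-1}_sng ⊔ E^n`. -/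
def BPathN (n : ℕ) : Type u :=
  {p : FinPath r s // p.1 ≤ n ∧ (p.1 < n → ¬ RegularVertex r (srcFin r s p.2))}

/-- Cylinder sets in `∂Eₙ`. -/
def ZNSet (n : ℕ) (S : Set (FinPath r s)) : Set (BPathN r s n) :=
  {x | ∃ (k : ℕ) (h : k ≤ x.val.1), ftrunc r s x.val k h ∈ S}

instance instTopBPathN (n : ℕ) : TopologicalSpace (BPathN r s n) :=
  TopologicalSpace.generateFrom
    {A | ∃ (U K : Set (FinPath r s)), IsOpen U ∧ IsCompact K ∧
      A = ZNSet r s n U \ ZNSet r s n K}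

noncomputable instance instMeasBPathN (n : ℕ) : MeasurableSpace (BPathN r s n) := borel _

/-- The map `ρₙ : ∂Eₙ₊₁ → ∂Eₙ`, truncating paths of length `n+1` and fixing shorter paths. -/
def rho (n : ℕ) (x : BPathN r s (n + 1)) : BPathN r s n :=
  if h : x.val.1 = n + 1 then
    ⟨ftrunc r s x.val n (by omega), ⟨le_refl n, fun hlt => absurd hlt (lt_irrefl n)⟩⟩
  else
    ⟨x.val, ⟨by have := x.property.1; omega, fun hlt => x.property.2 (by omega)⟩⟩

end BPathN

/-- The periodicity group of a boundary path. -/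
def Per (x : BPathCarrier r s) : Set ℤ :=
  {z | ∃ k l : ℕ, (k : ℕ∞) ≤ blen r s x ∧ (l : ℕ∞) ≤ blen r s x ∧
    z = (k : ℤ) - (l : ℤ) ∧ (shiftC r s)^[k] x = (shiftC r s)^[l] x}

section Gpd

variable [TopologicalSpace V] [TopologicalSpace E]

/-- The graph groupoid `𝒢_E`, as a set of triples. -/
def GraphGpd : Set (BPath r s × ℤ × BPath r s) :=
  {t | ∃ k l : ℕ, (k : ℕ∞) ≤ blen r s t.1.val ∧ (l : ℕ∞) ≤ blen r s t.2.2.val ∧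
    t.2.1 = (k : ℤ) - (l : ℤ) ∧ (shiftC r s)^[k] t.1.val = (shiftC r s)^[l] t.2.2.val}

end Gpd

/-- The infinite path `c^∞` obtained by repeating a cycle `c`. -/
def cycInf {m : ℕ} (c : PathN r s (m + 1)) (hc : rngFin r s c = srcFin r s c) :
    PathInf r s :=
  ⟨fun i => c.1 ⟨i % (m + 1), Nat.mod_lt i (Nat.succ_pos m)⟩, by
    intro i
    have hlt : i % (m + 1) < m + 1 := Nat.mod_lt i (Nat.succ_pos m)
    show s (c.1 ⟨i % (m + 1), Nat.mod_lt i (Nat.succ_pos m)⟩) =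
      r (c.1 ⟨(i + 1) % (m + 1), Nat.mod_lt (i + 1) (Nat.succ_pos m)⟩)
    by_cases h1 : i % (m + 1) < m
    · have key : (i + 1) % (m + 1) = i % (m + 1) + 1 := by
        conv_lhs => rw [← Nat.div_add_mod i (m + 1)]
        rw [Nat.add_assoc, Nat.mul_add_mod, Nat.mod_eq_of_lt (by omega)]
      exact c.2 _ _ key
    · have h2 : i % (m + 1) = m := by omega
      have key : (i + 1) % (m + 1) = 0 := by
        conv_lhs => rw [← Nat.div_add_mod i (m + 1)]
        rw [Nat.add_assoc, Nat.mul_add_mod, h2, Nat.mod_self]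
      have e1 : (⟨i % (m + 1), Nat.mod_lt i (Nat.succ_pos m)⟩ : Fin (m + 1)) =
          ⟨m, Nat.lt_succ_self m⟩ := Fin.ext h2
      have e2 : (⟨(i + 1) % (m + 1), Nat.mod_lt (i + 1) (Nat.succ_pos m)⟩ : Fin (m + 1)) =
          ⟨0, Nat.succ_pos m⟩ := Fin.ext key
      rw [e1, e2]
      exact hc.symm⟩

/-- Prepending a finite path `b` to an infinite path `d` with `s(b) = r(d)`. -/
def prepend : ∀ {n : ℕ} (b : PathN r s n) (d : PathInf r s),
    srcFin r s b = r (d.1 0) → PathInf r s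
  | 0, _, d, _ => d
  | n + 1, b, d, h =>
    ⟨fun i => if h' : i < n + 1 then b.1 ⟨i, h'⟩ else d.1 (i - (n + 1)), by
      intro i
      show s (if h' : i < n + 1 then b.1 ⟨i, h'⟩ else d.1 (i - (n + 1))) =
        r (if h' : i + 1 < n + 1 then b.1 ⟨i + 1, h'⟩ else d.1 (i + 1 - (n + 1)))
      by_cases h1 : i + 1 < n + 1
      · rw [dif_pos (by omega : i < n + 1), dif_pos h1]
        exact b.2 ⟨i, by omega⟩ ⟨i + 1, h1⟩ rfl
      · by_cases h2 : i < n + 1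
        · rw [dif_pos h2, dif_neg h1]
          have hi : i = n := by omega
          have h0 : i + 1 - (n + 1) = 0 := by omega
          have e : (⟨i, h2⟩ : Fin (n + 1)) = ⟨n, Nat.lt_succ_self n⟩ := Fin.ext hi
          rw [h0, e]
          exact h
        · rw [dif_neg h2, dif_neg h1]
          have h3 : i + 1 - (n + 1) = (i - (n + 1)) + 1 := by omega
          rw [h3]
          exact d.2 (i - (n + 1))⟩

/-- `b` ends with `c`: `b = a·c` for some finite path `a`. -/
def EndsWith {n m : ℕ} (b : PathN r s n) (c : PathN r s m) : Prop :=
  ∃ h : m ≤ n, ∀ i : Fin m,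
    edgeOf r s b ⟨n - m + (i : ℕ), by have := i.isLt; omega⟩ = edgeOf r s c i

/-- `x` is eventually cyclic with cycle of length `m + 1`: `x = b c^∞` for a cycle `c` of
length `m+1` and an exit `b` of `c`. -/
def EvCyclicWitness (x : BPathCarrier r s) (m : ℕ) : Prop :=
  ∃ (c : PathN r s (m + 1)) (hc : rngFin r s c = srcFin r s c)
    (k : ℕ) (b : PathN r s k)
    (hlink : srcFin r s b = r ((cycInf r s c hc).1 0)),
    srcFin r s b = rngFin r s c ∧ ¬ EndsWith r s b c ∧
    x = Sum.inr (prepend r s b (cycInf r s c hc) hlink)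


section CompactnessAux

variable [TopologicalSpace V] [TopologicalSpace E]

/-- Truncation of a boundary-path carrier, valued in `PathN`. -/
def gtr : ∀ (x : BPathCarrier r s) (n : ℕ), (n : ℕ∞) ≤ blen r s x → PathN r s n
  | .inl p, n, h => truncFin r s (by simpa [blen] using h) p.2
  | .inr a, n, _ => truncInf r s a n

lemma btrunc_eq (x : BPathCarrier r s) (n : ℕ) (h : (n : ℕ∞) ≤ blen r s x) :
    btrunc r s x n h = ⟨n, gtr r s x n h⟩ := by
  cases x <;> rfl

lemma truncFin_eq_self : ∀ {n : ℕ} (h : n ≤ n) (q : PathN r s n), truncFin r s h q = q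
  | 0, _, _ => rfl
  | _ + 1, h, q => Subtype.ext (funext fun i => congrArg q.1 (Fin.ext rfl))

lemma truncFin_trans : ∀ {k m n : ℕ} (hkm : k ≤ m) (hmn : m ≤ n) (q : PathN r s n),
    truncFin r s hkm (truncFin r s hmn q) = truncFin r s (le_trans hkm hmn) q
  | 0, 0, 0, _, _, _ => rfl
  | 0, 0, _ + 1, _, _, _ => rfl
  | 0, _ + 1, _ + 1, _, _, _ => rfl
  | _ + 1, _ + 1, _ + 1, _, _, q => Subtype.ext (funext fun i => congrArg q.1 (Fin.ext rfl))
  | _ + 1, 0, _, hkm, _, _ => absurd hkm (by omega)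
  | 0, _ + 1, 0, _, hmn, _ => absurd hmn (by omega)
  | _ + 1, _ + 1, 0, _, hmn, _ => absurd hmn (by omega)

lemma truncFin_truncInf : ∀ (a : PathInf r s) {k m : ℕ} (hkm : k ≤ m),
    truncFin r s hkm (truncInf r s a m) = truncInf r s a k
  | _, 0, 0, _ => rfl
  | _, 0, _ + 1, _ => rfl
  | _, _ + 1, _ + 1, _ => Subtype.ext (funext fun i => rfl)
  | _, _ + 1, 0, h => absurd h (by omega)

lemma gtr_compat (x : BPathCarrier r s) {k m : ℕ} (hkm : k ≤ m)
    (hm : (m : ℕ∞) ≤ blen r s x) (hk : (k : ℕ∞) ≤ blen r s x) :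
    gtr r s x k hk = truncFin r s hkm (gtr r s x m hm) := by
  cases x with
  | inl p => exact (truncFin_trans r s hkm _ p.2).symm
  | inr a => exact (truncFin_truncInf r s a hkm).symm

instance instT2PathN [T2Space V] [T2Space E] : ∀ n, T2Space (PathN r s n)
  | 0 => inferInstanceAs (T2Space V)
  | n + 1 => inferInstanceAs (T2Space {a : Fin (n + 1) → E // Comp r s (n + 1) a})

lemma continuous_truncFin (hr : Continuous r) :
    ∀ {m n : ℕ} (h : n ≤ m), Continuous (truncFin r s h : PathN r s m → PathN r s n)
  | 0, 0, _ => continuous_id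
  | _ + 1, 0, _ => hr.comp ((continuous_apply _).comp continuous_subtype_val)
  | 0, _ + 1, h => absurd h (by omega)
  | m + 1, n + 1, h => by
    have hcont : Continuous fun q : PathN r s (m + 1) =>
        fun i : Fin (n + 1) => (q.1 (Fin.castLE h i) : E) :=
      continuous_pi fun i => (continuous_apply (Fin.castLE h i)).comp continuous_subtype_val
    exact hcont.subtype_mk _

lemma continuous_srcFin (hcs : Continuous s) :
    ∀ {n : ℕ}, Continuous (srcFin r s : PathN r s n → V)
  | 0 => continuous_id
  | _ + 1 => hcs.comp ((continuous_apply _).comp continuous_subtype_val)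

lemma isClosed_comp [T2Space V] (hr : Continuous r) (hcs : Continuous s) (n : ℕ) :
    IsClosed {a : Fin (n + 1) → E | Comp r s (n + 1) a} := by
  have heq : {a : Fin (n + 1) → E | Comp r s (n + 1) a} =
      ⋂ (i : Fin (n + 1)) (j : Fin (n + 1)) (_ : (j : ℕ) = (i : ℕ) + 1),
        {a : Fin (n + 1) → E | s (a i) = r (a j)} := by
    ext a
    simp only [Set.mem_setOf_eq, Set.mem_iInter, Comp]
  rw [heq]
  exact isClosed_iInter fun i => isClosed_iInter fun j => isClosed_iInter fun _ =>
    isClosed_eq (hcs.comp (continuous_apply i)) (hr.comp (continuous_apply j))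

lemma isCompact_pathN_box [T2Space V] (hr : Continuous r) (hcs : Continuous s) (n : ℕ)
    (Ks : Fin (n + 1) → Set E) (hKs : ∀ i, IsCompact (Ks i)) :
    IsCompact {q : PathN r s (n + 1) | ∀ i, q.1 i ∈ Ks i} := by
  have hemb : Topology.IsClosedEmbedding
      (Subtype.val : {a : Fin (n + 1) → E // Comp r s (n + 1) a} → (Fin (n + 1) → E)) :=
    (isClosed_comp r s hr hcs n).isClosedEmbedding_subtypeVal
  have hpre := hemb.isCompact_preimage (isCompact_univ_pi hKs)
  have heq : (Subtype.val ⁻¹' Set.univ.pi Ks :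
      Set {a : Fin (n + 1) → E // Comp r s (n + 1) a}) =
      {q : PathN r s (n + 1) | ∀ i, q.1 i ∈ Ks i} := by
    ext q
    simp only [Set.mem_preimage, Set.mem_univ_pi]
    exact Iff.rfl
  rwa [heq] at hpre

lemma truncFin_apply {k m : ℕ} (h : k + 1 ≤ m + 1) (q : PathN r s (m + 1)) (i : Fin (k + 1)) :
    (truncFin r s h q).1 i = q.1 ⟨(i : ℕ), lt_of_lt_of_le i.isLt h⟩ := rfl

lemma isCompact_bump [T2Space V] [T2Space E] (hr : Continuous r) (hcs : Continuous s) {m : ℕ}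
    {D : Set (PathN r s m)} (hD : IsCompact D) {Q : Set V} (hQcl : IsClosed Q)
    (hQ : IsCompact (r ⁻¹' Q)) (hsrc : ∀ q ∈ D, srcFin r s q ∈ Q) :
    IsCompact (truncFin r s (Nat.le_succ m) ⁻¹' D) := by
  have hDcl : IsClosed D := hD.isClosed
  have hclosed : IsClosed (truncFin r s (Nat.le_succ m) ⁻¹' D) :=
    hDcl.preimage (continuous_truncFin r s hr (Nat.le_succ m))
  cases m with
  | zero =>
    refine IsCompact.of_isClosed_subset
      (isCompact_pathN_box r s hr hcs 0 (fun _ => r ⁻¹' Q) (fun _ => hQ)) hclosed ?_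
    intro q hq
    intro i
    have h0 : i = ⟨0, Nat.lt_succ_self 0⟩ := Fin.ext (by omega)
    rw [h0]
    show r (q.1 ⟨0, Nat.lt_succ_self 0⟩) ∈ Q
    exact hsrc _ hq
  | succ k =>
    classical
    set Ks : Fin (k + 2) → Set E := fun i =>
      if h : (i : ℕ) < k + 1 then (fun q : PathN r s (k + 1) => q.1 ⟨(i : ℕ), h⟩) '' D
      else r ⁻¹' Q with hKsdef
    have hKs : ∀ i, IsCompact (Ks i) := by
      intro i
      simp only [hKsdef]
      by_cases h : (i : ℕ) < k + 1
      · rw [dif_pos h]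
        exact hD.image ((continuous_apply _).comp continuous_subtype_val)
      · rw [dif_neg h]
        exact hQ
    refine IsCompact.of_isClosed_subset (isCompact_pathN_box r s hr hcs (k + 1) Ks hKs)
      hclosed ?_
    intro q hq i
    by_cases h : (i : ℕ) < k + 1
    · have : Ks i = (fun q : PathN r s (k + 1) => q.1 ⟨(i : ℕ), h⟩) '' D := by
        rw [hKsdef]; exact dif_pos h
      rw [this]
      exact ⟨truncFin r s (Nat.le_succ (k + 1)) q, hq, rfl⟩
    · have hKsi : Ks i = r ⁻¹' Q := by rw [hKsdef]; exact dif_neg h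
      rw [hKsi]
      have hival : (i : ℕ) = k + 1 := by omega
      have hcomp := q.2 ⟨k, by omega⟩ i (by simp only [Fin.val_mk]; omega)
      show r (q.1 i) ∈ Q
      rw [← hcomp]
      have hsq := hsrc _ hq
      have heq2 : srcFin r s (truncFin r s (Nat.le_succ (k + 1)) q) = s (q.1 ⟨k, by omega⟩) :=
        rfl
      rwa [heq2] at hsq

lemma isCompact_lvl {C : Set (FinPath r s)} (hC : IsCompact C) (m : ℕ) :
    IsCompact (Sigma.mk m ⁻¹' C : Set (PathN r s m)) :=
  Topology.IsClosedEmbedding.sigmaMk.isCompact_preimage hC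

lemma isOpen_lvl {U : Set (FinPath r s)} (hU : IsOpen U) (m : ℕ) :
    IsOpen (Sigma.mk m ⁻¹' U : Set (PathN r s m)) :=
  hU.preimage continuous_sigmaMk

lemma finite_levels {K : Set (FinPath r s)} (hK : IsCompact K) :
    ∃ t : Finset ℕ, ∀ p ∈ K, p.1 ∈ t := by
  obtain ⟨t, ht⟩ := hK.elim_finite_subcover
    (fun n => Set.range (Sigma.mk n : PathN r s n → FinPath r s))
    (fun n => isOpen_range_sigmaMk)
    (fun p _ => Set.mem_iUnion.mpr ⟨p.1, ⟨p.2, rfl⟩⟩)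
  refine ⟨t, fun p hp => ?_⟩
  obtain ⟨n, hn⟩ := Set.mem_iUnion.mp (ht hp)
  obtain ⟨hnt, q, hq⟩ := Set.mem_iUnion.mp hn
  rw [← hq]
  exact hnt

/-- The cylinder at a fixed level. -/
def cyl (m : ℕ) (W : Set (PathN r s m)) : Set (BPath r s) :=
  {x | ∃ h : (m : ℕ∞) ≤ blen r s x.val, gtr r s x.val m h ∈ W}

lemma cyl_mono {m : ℕ} {W W' : Set (PathN r s m)} (h : W ⊆ W') :
    cyl r s m W ⊆ cyl r s m W' := fun _ ⟨hx, hW⟩ => ⟨hx, h hW⟩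

lemma cyl_inter_subset {m : ℕ} (W W' : Set (PathN r s m)) :
    cyl r s m W ∩ cyl r s m W' ⊆ cyl r s m (W ∩ W') := by
  rintro x ⟨⟨h1, hx1⟩, ⟨h2, hx2⟩⟩
  exact ⟨h1, hx1, hx2⟩

lemma mem_ZSet_iff {S : Set (FinPath r s)} {x : BPath r s} :
    x ∈ ZSet r s S ↔ ∃ (m : ℕ) (h : (m : ℕ∞) ≤ blen r s x.val),
      gtr r s x.val m h ∈ (Sigma.mk m ⁻¹' S : Set (PathN r s m)) := by
  unfold ZSet
  simp only [Set.mem_setOf_eq, btrunc_eq]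
  rfl

lemma cyl_lvl_subset_ZSet {S : Set (FinPath r s)} (m : ℕ) :
    cyl r s m (Sigma.mk m ⁻¹' S) ⊆ ZSet r s S := by
  rintro x ⟨h, hx⟩
  exact mem_ZSet_iff r s |>.mpr ⟨m, h, hx⟩

lemma ZSet_subset_iUnion {S : Set (FinPath r s)} {t : Finset ℕ}
    (ht : ∀ p ∈ S, p.1 ∈ t) :
    ZSet r s S ⊆ ⋃ m ∈ (t : Set ℕ), cyl r s m (Sigma.mk m ⁻¹' S) := by
  intro x hx
  obtain ⟨m, h, hm⟩ := (mem_ZSet_iff r s).mp hx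
  exact Set.mem_biUnion (ht _ hm) ⟨h, hm⟩

lemma exists_limit (𝒰 : Ultrafilter (BPath r s)) {m : ℕ} {D : Set (PathN r s m)}
    (hD : IsCompact D) (hmem : cyl r s m D ∈ 𝒰) :
    ∃ p : PathN r s m, p ∈ D ∧
      ∀ W : Set (PathN r s m), IsOpen W → p ∈ W → cyl r s m W ∈ 𝒰 := by
  classical
  obtain ⟨x0, h0, _⟩ := Ultrafilter.nonempty_of_mem hmem
  set F : BPath r s → PathN r s m := fun x =>
    if h : (m : ℕ∞) ≤ blen r s x.val then gtr r s x.val m h else gtr r s x0.val m h0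
    with hF
  have hFD : F ⁻¹' D ∈ 𝒰 := by
    refine Filter.mem_of_superset hmem ?_
    rintro x ⟨h, hx⟩
    show F x ∈ D
    simp only [hF]
    rw [dif_pos h]
    exact hx
  obtain ⟨p, hpD, hple⟩ := hD.ultrafilter_le_nhds (𝒰.map F)
    (Filter.le_principal_iff.mpr (Filter.mem_map.mpr hFD))
  refine ⟨p, hpD, fun W hW hpW => ?_⟩
  have hFW : F ⁻¹' W ∈ 𝒰 := Filter.mem_map.mp (hple (hW.mem_nhds hpW))
  refine Filter.mem_of_superset (Filter.inter_mem hFW hmem) ?_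
  rintro x ⟨hxW, h, _⟩
  refine ⟨h, ?_⟩
  rw [Set.mem_preimage] at hxW
  simp only [hF] at hxW
  rw [dif_pos h] at hxW
  exact hxW

lemma mem_of_closed (𝒰 : Ultrafilter (BPath r s)) {m : ℕ} {p : PathN r s m}
    (hP1 : ∀ W : Set (PathN r s m), IsOpen W → p ∈ W → cyl r s m W ∈ 𝒰)
    {C : Set (PathN r s m)} (hC : IsClosed C) (hmem : cyl r s m C ∈ 𝒰) : p ∈ C := by
  by_contra hp
  have h1 := hP1 Cᶜ hC.isOpen_compl hp
  have h2 : (cyl r s m Cᶜ ∩ cyl r s m C : Set (BPath r s)) ∈ 𝒰 := Filter.inter_mem h1 hmem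
  obtain ⟨x, hx⟩ := Ultrafilter.nonempty_of_mem h2
  obtain ⟨⟨ha, hxa⟩, ⟨hb, hxb⟩⟩ := hx
  exact hxa hxb

lemma limit_unique [T2Space V] [T2Space E] (𝒰 : Ultrafilter (BPath r s)) {m : ℕ}
    {p q : PathN r s m}
    (hp : ∀ W : Set (PathN r s m), IsOpen W → p ∈ W → cyl r s m W ∈ 𝒰)
    (hq : ∀ W : Set (PathN r s m), IsOpen W → q ∈ W → cyl r s m W ∈ 𝒰) : p = q := by
  by_contra hne
  obtain ⟨Wp, Wq, hWp, hWq, hpW, hqW, hdis⟩ := t2_separation hne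
  have h2 := Filter.inter_mem (hp Wp hWp hpW) (hq Wq hWq hqW)
  obtain ⟨x, ⟨h1, hx1⟩, ⟨h2', hx2⟩⟩ := Ultrafilter.nonempty_of_mem h2
  exact Set.disjoint_left.mp hdis hx1 hx2

end CompactnessAux

open Filter Topology in
/-- For a topological graph and `K ⊆ E*` compact, the cylinder set
`Z(K) = {a ∈ ∂E : a(n) ∈ K for some 0 ≤ n ≤ |a|}` is compact in the boundary path
space `∂E`. -/
theorem stmt9 {V E : Type u} (r s : E → V) [TopologicalSpace V] [TopologicalSpace E]
    [T2Space V] [T2Space E] [LocallyCompactSpace V] [LocallyCompactSpace E]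
    (hr : Continuous r) (hs : IsLocalHomeomorph s)
    (K : Set (FinPath r s)) (hK : IsCompact K) :
    IsCompact (ZSet r s K) := by
  classical
  have hcs : Continuous s := hs.continuous
  rw [isCompact_iff_ultrafilter_le_nhds]
  intro 𝒰 hle
  have hZK : ZSet r s K ∈ 𝒰 := Filter.le_principal_iff.mp hle
  -- `K` meets only finitely many levels; get a level `n` charged by the ultrafilter
  obtain ⟨tK, htK⟩ := finite_levels r s hK
  have hKU : (⋃ m ∈ (tK : Set ℕ), cyl r s m (Sigma.mk m ⁻¹' K)) ∈ 𝒰 :=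
    Filter.mem_of_superset hZK (ZSet_subset_iUnion r s htK)
  obtain ⟨n, _, hn𝒰⟩ := (Ultrafilter.finite_biUnion_mem_iff tK.finite_toSet).mp hKU
  -- good levels
  set Good : ℕ → Prop := fun m => ∃ D : Set (PathN r s m), IsCompact D ∧ cyl r s m D ∈ 𝒰
    with hGoodDef
  have hGn : Good n := ⟨_, isCompact_lvl r s hK n, hn𝒰⟩
  have hdown : ∀ m, Good (m + 1) → Good m := by
    rintro m ⟨D, hDc, hDm⟩
    refine ⟨truncFin r s (Nat.le_succ m) '' D,
      hDc.image (continuous_truncFin r s hr (Nat.le_succ m)), ?_⟩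
    refine Filter.mem_of_superset hDm ?_
    rintro x ⟨h, hx⟩
    refine ⟨le_trans (Nat.cast_le.mpr (Nat.le_succ m)) h, ?_⟩
    exact ⟨_, hx, (gtr_compat r s x.val (Nat.le_succ m) h _).symm⟩
  have hdownle : ∀ m k, k ≤ m → Good m → Good k := by
    intro m
    induction m with
    | zero => intro k hk h; rwa [Nat.le_zero.mp hk]
    | succ m ih =>
      intro k hk h
      rcases Nat.lt_succ_iff_lt_or_eq.mp (Nat.lt_succ_of_le hk) with h' | h'
      · exact ih k (by omega) (hdown m h)
      · rwa [h']
  -- extract limits at good levels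
  have hlim : ∀ m, Good m → ∃ p : PathN r s m,
      (∀ W : Set (PathN r s m), IsOpen W → p ∈ W → cyl r s m W ∈ 𝒰) ∧
      (∀ C : Set (PathN r s m), IsClosed C → cyl r s m C ∈ 𝒰 → p ∈ C) := by
    rintro m ⟨D, hDc, hDm⟩
    obtain ⟨p, _, hP⟩ := exists_limit r s 𝒰 hDc hDm
    exact ⟨p, hP, fun C hC hCm => mem_of_closed r s 𝒰 hP hC hCm⟩
  choose P hP1 hP2 using hlim
  -- coherence of the limits
  have hcons : ∀ k m (hkm : k ≤ m) (hm : Good m) (hk : Good k),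
      P k hk = truncFin r s hkm (P m hm) := by
    intro k m hkm hm hk
    refine limit_unique r s 𝒰 (hP1 k hk) ?_
    intro W hW hpW
    have hW' : cyl r s m (truncFin r s hkm ⁻¹' W) ∈ 𝒰 :=
      hP1 m hm _ (hW.preimage (continuous_truncFin r s hr hkm)) hpW
    refine Filter.mem_of_superset hW' ?_
    rintro x ⟨h, hx⟩
    refine ⟨le_trans (Nat.cast_le.mpr hkm) h, ?_⟩
    rw [gtr_compat r s x.val hkm h]
    exact hx
  -- a sufficient criterion for convergence towards a boundary path
  have convCrit : ∀ x : BPath r s,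
      (∀ (m : ℕ) (h : (m : ℕ∞) ≤ blen r s x.val) (W : Set (PathN r s m)),
        IsOpen W → gtr r s x.val m h ∈ W → cyl r s m W ∈ 𝒰) →
      (∀ (m : ℕ) (D : Set (PathN r s m)), IsCompact D → cyl r s m D ∈ 𝒰 →
        ∃ h : (m : ℕ∞) ≤ blen r s x.val, gtr r s x.val m h ∈ D) →
      x ∈ ZSet r s K ∧ ↑𝒰 ≤ 𝓝 x := by
    intro x hA hB
    constructor
    · obtain ⟨h, hx⟩ := hB n _ (isCompact_lvl r s hK n) hn𝒰
      exact (mem_ZSet_iff r s).mpr ⟨n, h, hx⟩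
    · have hnhds : 𝓝 x = ⨅ A ∈ {A : Set (BPath r s) | x ∈ A ∧
          A ∈ {A | ∃ (U C : Set (FinPath r s)), IsOpen U ∧
          IsCompact C ∧ A = ZSet r s U \ ZSet r s C}}, 𝓟 A :=
        TopologicalSpace.nhds_generateFrom
      rw [hnhds]
      refine le_iInf fun A => le_iInf fun hA' => Filter.le_principal_iff.mpr ?_
      obtain ⟨hxA, ⟨U, C, hU, hC, rfl⟩⟩ := hA'
      have hZU : ZSet r s U ∈ 𝒰 := by
        obtain ⟨m, h, hm⟩ := (mem_ZSet_iff r s).mp hxA.1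
        exact Filter.mem_of_superset (hA m h _ (isOpen_lvl r s hU m) hm)
          (cyl_lvl_subset_ZSet r s m)
      have hZC : ZSet r s C ∉ 𝒰 := by
        intro hmem
        obtain ⟨tC, htC⟩ := finite_levels r s hC
        have hCU : (⋃ m ∈ (tC : Set ℕ), cyl r s m (Sigma.mk m ⁻¹' C)) ∈ 𝒰 :=
          Filter.mem_of_superset hmem (ZSet_subset_iUnion r s htC)
        obtain ⟨m, _, hm𝒰⟩ := (Ultrafilter.finite_biUnion_mem_iff tC.finite_toSet).mp hCU
        obtain ⟨h, hx⟩ := hB m _ (isCompact_lvl r s hC m) hm𝒰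
        exact hxA.2 ((mem_ZSet_iff r s).mpr ⟨m, h, hx⟩)
      have : ZSet r s U \ ZSet r s C = ZSet r s U ∩ (ZSet r s C)ᶜ := rfl
      rw [this]
      exact Filter.inter_mem hZU (Ultrafilter.compl_mem_iff_notMem.mpr hZC)
  by_cases hall : ∀ m, Good m
  · -- infinite-path case
    set e : ℕ → E := fun i => (P (i + 1) (hall (i + 1))).1 ⟨i, Nat.lt_succ_self i⟩ with he
    have hedge : ∀ i : ℕ, e i = (P (i + 2) (hall (i + 2))).1 ⟨i, by omega⟩ := by
      intro i
      rw [he]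
      show (P (i + 1) (hall (i + 1))).1 ⟨i, Nat.lt_succ_self i⟩ = _
      rw [hcons (i + 1) (i + 2) (by omega) (hall (i + 2)) (hall (i + 1))]
      rfl
    have hacomp : ∀ i : ℕ, s (e i) = r (e (i + 1)) := by
      intro i
      rw [hedge i]
      have h2 : e (i + 1) = (P (i + 2) (hall (i + 2))).1 ⟨i + 1, by omega⟩ := by rw [he]
      rw [h2]
      exact (P (i + 2) (hall (i + 2))).2 ⟨i, by omega⟩ ⟨i + 1, by omega⟩ rfl
    set a : PathInf r s := ⟨e, hacomp⟩ with ha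
    have hgtr : ∀ (m : ℕ) (h : (m : ℕ∞) ≤ blen r s (Sum.inr a : BPathCarrier r s)),
        gtr r s (Sum.inr a) m h = P m (hall m) := by
      intro m h
      cases m with
      | zero =>
        show r (e 0) = P 0 (hall 0)
        rw [hcons 0 1 (by omega) (hall 1) (hall 0)]
        rfl
      | succ m =>
        show truncInf r s a (m + 1) = P (m + 1) (hall (m + 1))
        refine Subtype.ext (funext fun i => ?_)
        show e (i : ℕ) = (P (m + 1) (hall (m + 1))).1 i
        rw [he]
        show (P ((i : ℕ) + 1) (hall _)).1 ⟨(i : ℕ), Nat.lt_succ_self _⟩ = _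
        rw [hcons ((i : ℕ) + 1) (m + 1) i.isLt (hall (m + 1)) (hall ((i : ℕ) + 1))]
        exact congrArg _ (Fin.ext rfl)
    set x : BPath r s := ⟨Sum.inr a, fun p hp => by cases hp⟩ with hx
    obtain ⟨hmem, hconv⟩ := convCrit x
      (fun m h W hW hmW => hP1 m (hall m) W hW (by rwa [show gtr r s x.val m h = P m (hall m)
        from hgtr m h] at hmW))
      (fun m D hD hDm => ⟨le_top, by
        rw [show gtr r s x.val m le_top = P m (hall m) from hgtr m le_top]
        exact hP2 m (hall m) D hD.isClosed hDm⟩)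
    exact ⟨x, hmem, hconv⟩
  · -- finite-path case
    push_neg at hall
    have hex : ∃ m, ¬ Good m := hall
    set mb := Nat.find hex with hmb
    have hmbbad : ¬ Good mb := Nat.find_spec hex
    have hgoodlt : ∀ m, m < mb → Good m := fun m hm => not_not.mp (Nat.find_min hex hm)
    have hbadup : ∀ m, mb ≤ m → ¬ Good m := fun m hm hg => hmbbad (hdownle m mb hm hg)
    have hnmb : n < mb := by
      by_contra h
      exact hbadup n (by omega) hGn
    obtain ⟨ms, hms⟩ : ∃ ms, mb = ms + 1 := ⟨mb - 1, by omega⟩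
    have hgms : Good ms := hgoodlt ms (by omega)
    have hnms : n ≤ ms := by omega
    set p := P ms hgms with hp
    -- the source of `p` is singular
    have hsing : ¬ RegularVertex r (srcFin r s p) := by
      rintro ⟨U, hUo, hvU, hclU, hrc, hrr⟩
      by_cases hT : cyl r s (ms + 1) (Set.univ : Set (PathN r s (ms + 1))) ∈ 𝒰
      · -- bump to level `ms + 1`, contradicting badness
        obtain ⟨D0, hD0c, hD0m⟩ := id hgms
        set D : Set (PathN r s ms) := D0 ∩ srcFin r s ⁻¹' closure U with hD
        have hDc : IsCompact D :=
          hD0c.inter_right (isClosed_closure.preimage (continuous_srcFin r s hcs))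
        have hDm : cyl r s ms D ∈ 𝒰 := by
          have h1 : cyl r s ms (srcFin r s ⁻¹' U) ∈ 𝒰 :=
            hP1 ms hgms _ (hUo.preimage (continuous_srcFin r s hcs)) hvU
          refine Filter.mem_of_superset (Filter.inter_mem hD0m h1) ?_
          refine subset_trans (cyl_inter_subset r s _ _) (cyl_mono r s ?_)
          exact Set.inter_subset_inter_right _ (Set.preimage_mono subset_closure)
        have hbump : IsCompact (truncFin r s (Nat.le_succ ms) ⁻¹' D) :=
          isCompact_bump r s hr hcs hDc isClosed_closure hrc (fun q hq => hq.2)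
        refine hbadup (ms + 1) (by omega) ⟨_, hbump, ?_⟩
        refine Filter.mem_of_superset (Filter.inter_mem hDm hT) ?_
        rintro y ⟨⟨h1, hy1⟩, ⟨h2, _⟩⟩
        refine ⟨h2, ?_⟩
        show truncFin r s (Nat.le_succ ms) (gtr r s y.val (ms + 1) h2) ∈ D
        rw [← gtr_compat r s y.val (Nat.le_succ ms) h2 h1]
        exact hy1
      · -- otherwise the ultrafilter charges genuine finite paths of length `ms`
        have hcompl : (cyl r s (ms + 1) (Set.univ : Set (PathN r s (ms + 1))))ᶜ ∈ 𝒰 :=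
          Ultrafilter.compl_mem_iff_notMem.mpr hT
        have h1 : cyl r s ms (srcFin r s ⁻¹' U) ∈ 𝒰 :=
          hP1 ms hgms _ (hUo.preimage (continuous_srcFin r s hcs)) hvU
        obtain ⟨y, hyc, h2, hy2⟩ :=
          Ultrafilter.nonempty_of_mem (Filter.inter_mem hcompl h1)
        have hlt : ¬ ((ms + 1 : ℕ) : ℕ∞) ≤ blen r s y.val := fun h => hyc ⟨h, trivial⟩
        have hy2' := hy2
        have h2' := h2
        rcases hyval : y.val with pf | b
        · rw [hyval] at h2' hlt
          obtain ⟨len, q⟩ := pf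
          have hlen : len = ms := by
            have hb1 : (ms : ℕ∞) ≤ (len : ℕ∞) := h2'
            have hb2 : ¬ ((ms + 1 : ℕ) : ℕ∞) ≤ (len : ℕ∞) := hlt
            rw [Nat.cast_le] at hb1
            rw [Nat.cast_le] at hb2
            omega
          subst hlen
          have hq : srcFin r s q ∈ U := by
            have : gtr r s (Sum.inl ⟨len, q⟩) len h2' ∈ srcFin r s ⁻¹' U := by
              have := hy2
              rw [show gtr r s y.val len h2 = gtr r s (Sum.inl ⟨len, q⟩) len h2' by
                congr 1 <;> rw [hyval]] at this
              exact this
            rw [show gtr r s (Sum.inl ⟨len, q⟩) len h2' = truncFin r s (le_refl len) q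
              from rfl] at this
            rwa [truncFin_eq_self] at this
          exact y.2 ⟨len, q⟩ hyval ⟨U, hUo, hq, hclU, hrc, hrr⟩
        · rw [hyval] at hlt
          exact hlt le_top
    -- assemble the finite boundary path
    set x : BPath r s := ⟨Sum.inl ⟨ms, p⟩,
      fun q hq => by
        have := Sum.inl.inj hq
        rw [← this]
        exact hsing⟩ with hx
    have hblen : blen r s x.val = (ms : ℕ∞) := rfl
    have hgtrf : ∀ (k : ℕ) (h : (k : ℕ∞) ≤ blen r s x.val),
        ∃ hk : Good k, gtr r s x.val k h = P k hk := by
      intro k h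
      have hkm : k ≤ ms := by
        have h' := h
        rw [hblen, Nat.cast_le] at h'
        exact h'
      refine ⟨hgoodlt k (by omega), ?_⟩
      have heq : gtr r s x.val k h = truncFin r s hkm p := rfl
      rw [heq]
      exact (hcons k ms hkm hgms _).symm
    obtain ⟨hmem, hconv⟩ := convCrit x
      (fun m h W hW hmW => by
        obtain ⟨hk, hgk⟩ := hgtrf m h
        rw [hgk] at hmW
        exact hP1 m hk W hW hmW)
      (fun m D hD hDm => by
        by_cases hmle : m ≤ ms
        · have h : (m : ℕ∞) ≤ blen r s x.val := by rw [hblen]; exact_mod_cast hmle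
          refine ⟨h, ?_⟩
          obtain ⟨hk, hgk⟩ := hgtrf m h
          rw [hgk]
          exact hP2 m hk D hD.isClosed hDm
        · exact absurd ⟨D, hD, hDm⟩ (hbadup m (by omega)))
    exact ⟨x, hmem, hconv⟩

end TopGraph
end

section
/- Let E be a topological graph and a ∈ ∂E a boundary path. The periodicity group Per(a) = { k − l ∈ ℤ : k, l ∈ ℕ₀, k, l ≤ |a|, σᵏ(a) = σˡ(a) } is nontrivial (≠ {0}) if and only if a is eventually cyclic, i.e. a = b c^∞ for some cycle c ∈ ΩE and some exit b of c. Moreover in that case, with c chosen of minimal length, Per(a) = |c|ℤ. -/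
open MeasureTheory Set

namespace TopGraph

universe u
variable {V E : Type u} (r s : E → V)

section AuxPer

/-- The tail of an infinite path. -/
def tailInf (a : PathInf r s) (k : ℕ) : PathInf r s :=
  ⟨fun i => a.1 (i + k), fun i => by
    show s (a.1 (i + k)) = r (a.1 (i + 1 + k))
    rw [show i + 1 + k = i + k + 1 by omega]
    exact a.2 (i + k)⟩

lemma shiftC_iter_inr (a : PathInf r s) (k : ℕ) :
    (shiftC r s)^[k] (Sum.inr a) = Sum.inr (tailInf r s a k) := by
  induction k generalizing a with
  | zero => exact congrArg Sum.inr (Subtype.ext rfl)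
  | succ n ih =>
    show (shiftC r s)^[n] (shiftC r s (Sum.inr a)) = _
    have h1 : shiftC r s (Sum.inr a) = Sum.inr (tailInf r s a 1) :=
      congrArg Sum.inr (Subtype.ext rfl)
    rw [h1, ih (tailInf r s a 1)]
    exact congrArg Sum.inr (Subtype.ext rfl)

lemma zero_mem_per (x : BPathCarrier r s) : (0 : ℤ) ∈ Per r s x :=
  ⟨0, 0, by simp, by simp, by simp, rfl⟩

lemma per_inr_iff (a : PathInf r s) (z : ℤ) :
    z ∈ Per r s (Sum.inr a) ↔
      ∃ k l : ℕ, z = (k : ℤ) - l ∧ ∀ i, a.1 (i + k) = a.1 (i + l) := by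
  constructor
  · rintro ⟨k, l, -, -, hz, heq⟩
    rw [shiftC_iter_inr r s a k, shiftC_iter_inr r s a l] at heq
    exact ⟨k, l, hz, fun i => congrFun (congrArg Subtype.val (Sum.inr.inj heq)) i⟩
  · rintro ⟨k, l, hz, h⟩
    refine ⟨k, l, le_top, le_top, hz, ?_⟩
    rw [shiftC_iter_inr r s a k, shiftC_iter_inr r s a l]
    exact congrArg Sum.inr (Subtype.ext (funext h))

/-- `a` is eventually periodic with period `p`. -/
def HasPer (a : PathInf r s) (p : ℕ) : Prop :=
  ∃ l : ℕ, ∀ i, l ≤ i → a.1 (i + p) = a.1 i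

lemma hasper_of_shift {a : PathInf r s} {k l : ℕ}
    (h : ∀ i, a.1 (i + k) = a.1 (i + l)) (hlk : l < k) : HasPer r s a (k - l) :=
  ⟨l, fun j hj => by
    have h2 := h (j - l)
    rw [show j - l + k = j + (k - l) by omega, show j - l + l = j by omega] at h2
    exact h2⟩

lemma hasper_mod {a : PathInf r s} {p l : ℕ} (hp : 0 < p)
    (h : ∀ i, l ≤ i → a.1 (i + p) = a.1 i) :
    ∀ i, l ≤ i → a.1 i = a.1 (l + (i - l) % p) := by
  intro i
  induction i using Nat.strong_induction_on with
  | _ i ih =>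
    intro hi
    by_cases hip : i < l + p
    · rw [Nat.mod_eq_of_lt (by omega), Nat.add_sub_cancel' hi]
    · have h1 : a.1 i = a.1 (i - p) := by
        have h2 := h (i - p) (by omega)
        rw [show i - p + p = i by omega] at h2
        exact h2
      rw [h1, ih (i - p) (by omega) (by omega)]
      congr 2
      rw [show i - l = (i - p - l) + p by omega, Nat.add_mod_right]

lemma hasper_mul {a : PathInf r s} {p l : ℕ}
    (h : ∀ i, l ≤ i → a.1 (i + p) = a.1 i) (n : ℕ) :
    ∀ i, l ≤ i → a.1 (i + n * p) = a.1 i := by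
  induction n with
  | zero => intro i _; simp
  | succ n ih =>
    intro i hi
    rw [show i + (n + 1) * p = i + n * p + p by ring, h (i + n * p) (by omega), ih i hi]

lemma hasper_sub {a : PathInf r s} {p q : ℕ} (hq : 0 < q) (hqp : q < p)
    (hp : HasPer r s a p) (hq' : HasPer r s a q) : HasPer r s a (p - q) := by
  obtain ⟨l1, h1⟩ := hp
  obtain ⟨l2, h2⟩ := hq'
  refine ⟨max l1 l2, fun i hi => ?_⟩
  have e1 : a.1 (i + (p - q) + q) = a.1 (i + (p - q)) := h2 _ (by omega)
  rw [show i + (p - q) + q = i + p by omega] at e1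
  rw [← e1]
  exact h1 i (by omega)

lemma dvd_of_min {a : PathInf r s} {d : ℕ} (hd : 0 < d) (hdp : HasPer r s a d)
    (hmin : ∀ q, 0 < q → HasPer r s a q → d ≤ q) :
    ∀ p, 0 < p → HasPer r s a p → d ∣ p := by
  intro p
  induction p using Nat.strong_induction_on with
  | _ p ih =>
    intro hp hper
    have hdlep := hmin p hp hper
    rcases eq_or_lt_of_le hdlep with heq | hlt
    · exact heq ▸ dvd_refl d
    · have hsub : HasPer r s a (p - d) := hasper_sub r s hd hlt hper hdp
      obtain ⟨c0, hc0⟩ := ih (p - d) (by omega) (by omega) hsub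
      exact ⟨c0 + 1, by rw [Nat.mul_succ, ← hc0]; omega⟩

lemma cycInf_apply {m : ℕ} (c : PathN r s (m + 1)) (hc : rngFin r s c = srcFin r s c)
    (i : ℕ) :
    (cycInf r s c hc).1 i = c.1 ⟨i % (m + 1), Nat.mod_lt i (Nat.succ_pos m)⟩ := rfl

lemma hasper_of_witness {a : PathInf r s} {m : ℕ}
    (h : EvCyclicWitness r s (Sum.inr a) m) : HasPer r s a (m + 1) := by
  obtain ⟨c, hc, k, b, hlink, -, -, heq⟩ := h
  have ha : a = prepend r s b (cycInf r s c hc) hlink := Sum.inr.inj heq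
  subst ha
  refine ⟨k, fun i hi => ?_⟩
  match k, b, hlink with
  | 0, b, hlink =>
    show (cycInf r s c hc).1 (i + (m + 1)) = (cycInf r s c hc).1 i
    rw [cycInf_apply, cycInf_apply]
    exact congrArg c.1 (Fin.ext (Nat.add_mod_right i (m + 1)))
  | n + 1, b, hlink =>
    show (if h' : i + (m + 1) < n + 1 then b.1 ⟨i + (m + 1), h'⟩
        else (cycInf r s c hc).1 (i + (m + 1) - (n + 1))) =
      (if h' : i < n + 1 then b.1 ⟨i, h'⟩ else (cycInf r s c hc).1 (i - (n + 1)))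
    rw [dif_neg (by omega), dif_neg (by omega), cycInf_apply, cycInf_apply]
    refine congrArg c.1 (Fin.ext ?_)
    show (i + (m + 1) - (n + 1)) % (m + 1) = (i - (n + 1)) % (m + 1)
    rw [show i + (m + 1) - (n + 1) = (i - (n + 1)) + (m + 1) by omega, Nat.add_mod_right]

lemma witness_of_hasper {a : PathInf r s} {m : ℕ} (h : HasPer r s a (m + 1)) :
    EvCyclicWitness r s (Sum.inr a) m := by
  classical
  have hex : ∃ l : ℕ, ∀ i, l ≤ i → a.1 (i + (m + 1)) = a.1 i := h
  obtain ⟨l0, hl, hmin⟩ :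
      ∃ l0 : ℕ, (∀ i, l0 ≤ i → a.1 (i + (m + 1)) = a.1 i) ∧
        ∀ l', l' < l0 → ¬ ∀ i, l' ≤ i → a.1 (i + (m + 1)) = a.1 i :=
    ⟨Nat.find hex, Nat.find_spec hex, fun l' h' => Nat.find_min hex h'⟩
  match l0, hl, hmin with
  | 0, hl, hmin =>
    have hcomp : Comp r s (m + 1) (fun j : Fin (m + 1) => a.1 (0 + (j : ℕ))) := by
      intro i j hij
      show s (a.1 (0 + (i : ℕ))) = r (a.1 (0 + (j : ℕ)))
      rw [hij]
      exact a.2 (0 + (i : ℕ))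
    have hc : rngFin r s (n := m + 1) ⟨fun j : Fin (m + 1) => a.1 (0 + (j : ℕ)), hcomp⟩ =
        srcFin r s (n := m + 1) ⟨fun j : Fin (m + 1) => a.1 (0 + (j : ℕ)), hcomp⟩ := by
      show r (a.1 (0 + 0)) = s (a.1 (0 + m))
      rw [a.2 (0 + m), show 0 + m + 1 = 0 + (m + 1) by omega, hl 0 (Nat.zero_le 0),
        show 0 + 0 = 0 by omega]
    refine ⟨⟨fun j : Fin (m + 1) => a.1 (0 + (j : ℕ)), hcomp⟩, hc, 0,
      (r (a.1 (0 + 0)) : PathN r s 0), ?_, ?_, ?_, ?_⟩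
    · show r (a.1 (0 + 0)) = r (a.1 (0 + 0 % (m + 1)))
      rw [Nat.zero_mod]
    · show r (a.1 (0 + 0)) = r (a.1 (0 + 0))
      rfl
    · rintro ⟨hle, -⟩
      omega
    · refine congrArg Sum.inr (Subtype.ext (funext fun i => ?_))
      show a.1 i = a.1 (0 + i % (m + 1))
      have h9 := hasper_mod r s (Nat.succ_pos m) hl i (Nat.zero_le i)
      simpa using h9
  | l' + 1, hl, hmin =>
    have hcomp : Comp r s (m + 1) (fun j : Fin (m + 1) => a.1 (l' + 1 + (j : ℕ))) := by
      intro i j hij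
      show s (a.1 (l' + 1 + (i : ℕ))) = r (a.1 (l' + 1 + (j : ℕ)))
      rw [hij]
      exact a.2 (l' + 1 + (i : ℕ))
    have hc : rngFin r s (n := m + 1)
          ⟨fun j : Fin (m + 1) => a.1 (l' + 1 + (j : ℕ)), hcomp⟩ =
        srcFin r s (n := m + 1)
          ⟨fun j : Fin (m + 1) => a.1 (l' + 1 + (j : ℕ)), hcomp⟩ := by
      show r (a.1 (l' + 1 + 0)) = s (a.1 (l' + 1 + m))
      rw [a.2 (l' + 1 + m), show l' + 1 + m + 1 = l' + 1 + (m + 1) by omega,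
        hl (l' + 1) le_rfl, show l' + 1 + 0 = l' + 1 by omega]
    have bcomp : Comp r s (l' + 1) (fun j : Fin (l' + 1) => a.1 (j : ℕ)) := by
      intro i j hij
      show s (a.1 (i : ℕ)) = r (a.1 (j : ℕ))
      rw [hij]
      exact a.2 (i : ℕ)
    refine ⟨⟨fun j : Fin (m + 1) => a.1 (l' + 1 + (j : ℕ)), hcomp⟩, hc, l' + 1,
      ⟨fun j : Fin (l' + 1) => a.1 (j : ℕ), bcomp⟩, ?_, ?_, ?_, ?_⟩
    · show s (a.1 l') = r (a.1 (l' + 1 + 0 % (m + 1)))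
      rw [Nat.zero_mod]
      exact a.2 l'
    · show s (a.1 l') = r (a.1 (l' + 1 + 0))
      exact a.2 l'
    · rintro ⟨hle, hall⟩
      refine hmin (l' + 1 - (m + 1)) (by omega) (fun j hj => ?_)
      by_cases hjl : l' + 1 ≤ j
      · exact hl j hjl
      · have h2 : a.1 (l' + 1 - (m + 1) + (j - (l' + 1 - (m + 1)))) =
            a.1 (l' + 1 + (j - (l' + 1 - (m + 1)))) :=
          hall ⟨j - (l' + 1 - (m + 1)), by omega⟩
        rw [show l' + 1 - (m + 1) + (j - (l' + 1 - (m + 1))) = j by omega,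
          show l' + 1 + (j - (l' + 1 - (m + 1))) = j + (m + 1) by omega] at h2
        exact h2.symm
    · refine congrArg Sum.inr (Subtype.ext (funext fun i => ?_))
      show a.1 i = if h' : i < l' + 1 then a.1 i
        else a.1 (l' + 1 + (i - (l' + 1)) % (m + 1))
      by_cases h' : i < l' + 1
      · rw [dif_pos h']
      · rw [dif_neg h']
        exact hasper_mod r s (Nat.succ_pos m) hl i (by omega)

lemma shiftF_fst (p : FinPath r s) : (shiftF r s p).1 = p.1 - 1 := by
  rcases p with ⟨n, q⟩
  match n, q with
  | 0, q => rfl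
  | 1, q => rfl
  | n + 2, q => rfl

lemma shiftC_iter_inl (p : FinPath r s) (k : ℕ) :
    ∃ q : FinPath r s, (shiftC r s)^[k] (Sum.inl p) = Sum.inl q ∧ q.1 = p.1 - k := by
  induction k generalizing p with
  | zero => exact ⟨p, rfl, by omega⟩
  | succ n ih =>
    show ∃ q : FinPath r s, (shiftC r s)^[n] (shiftC r s (Sum.inl p)) = Sum.inl q ∧ q.1 = p.1 - (n + 1)
    have h1 : shiftC r s (Sum.inl p) = Sum.inl (shiftF r s p) := rfl
    rw [h1]
    obtain ⟨q, hq, hq1⟩ := ih (shiftF r s p)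
    exact ⟨q, hq, by rw [hq1, shiftF_fst]; omega⟩

lemma per_inl (p : FinPath r s) : Per r s (Sum.inl p) = {0} := by
  ext z
  simp only [Set.mem_singleton_iff]
  constructor
  · rintro ⟨k, l, hk, hl, hz, heq⟩
    have hk' : k ≤ p.1 := by
      have h2 : (k : ℕ∞) ≤ (p.1 : ℕ∞) := hk
      exact_mod_cast h2
    have hl' : l ≤ p.1 := by
      have h2 : (l : ℕ∞) ≤ (p.1 : ℕ∞) := hl
      exact_mod_cast h2
    obtain ⟨qk, hqk, hqk1⟩ := shiftC_iter_inl r s p k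
    obtain ⟨ql, hql, hql1⟩ := shiftC_iter_inl r s p l
    rw [hqk, hql] at heq
    have h3 : qk = ql := Sum.inl.inj heq
    have h4 : qk.1 = ql.1 := by rw [h3]
    omega
  · rintro rfl
    exact zero_mem_per r s _

lemma main_aux (xv : BPathCarrier r s) :
    (Per r s xv ≠ {0} ↔ ∃ m : ℕ, EvCyclicWitness r s xv m) ∧
    (∀ m : ℕ, EvCyclicWitness r s xv m →
      (∀ m' : ℕ, EvCyclicWitness r s xv m' → m ≤ m') →
      Per r s xv = {z : ℤ | ((m : ℤ) + 1) ∣ z}) := by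
  rcases xv with p | a
  · constructor
    · rw [per_inl]
      simp only [ne_eq, not_true_eq_false, false_iff, not_exists]
      rintro m ⟨c, hc, k, b, hlink, -, -, habs⟩
      exact Sum.inl_ne_inr habs
    · rintro m ⟨c, hc, k, b, hlink, -, -, habs⟩
      exact absurd habs (fun h => Sum.inl_ne_inr h)
  · have hiff : ∀ m : ℕ, EvCyclicWitness r s (Sum.inr a) m ↔ HasPer r s a (m + 1) :=
      fun m => ⟨hasper_of_witness r s, witness_of_hasper r s⟩
    constructor
    · constructor
      · intro hne
        have h0 : (0 : ℤ) ∈ Per r s (Sum.inr a) := zero_mem_per r s _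
        have hz : ∃ z ∈ Per r s (Sum.inr a), z ≠ 0 := by
          by_contra hcon
          push_neg at hcon
          exact hne (Set.eq_singleton_iff_unique_mem.mpr ⟨h0, fun z hz => hcon z hz⟩)
        obtain ⟨z, hzmem, hz0⟩ := hz
        rw [per_inr_iff] at hzmem
        obtain ⟨k, l, rfl, hkl⟩ := hzmem
        have hp : ∃ p : ℕ, 0 < p ∧ HasPer r s a p := by
          rcases lt_trichotomy k l with h | h | h
          · exact ⟨l - k, by omega, hasper_of_shift r s (fun i => (hkl i).symm) h⟩
          · exact absurd (by omega : (k : ℤ) - l = 0) hz0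
          · exact ⟨k - l, by omega, hasper_of_shift r s hkl h⟩
        obtain ⟨p, hp0, hper⟩ := hp
        exact ⟨p - 1, witness_of_hasper r s (by rwa [Nat.sub_add_cancel hp0])⟩
      · rintro ⟨m, hw⟩
        have hper := hasper_of_witness r s hw
        obtain ⟨l, hl⟩ := hper
        have hmem : ((m : ℤ) + 1) ∈ Per r s (Sum.inr a) := by
          rw [per_inr_iff]
          refine ⟨l + (m + 1), l, by push_cast; ring, fun i => ?_⟩
          rw [show i + (l + (m + 1)) = i + l + (m + 1) by omega]
          exact hl (i + l) (by omega)
        intro hsing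
        rw [hsing] at hmem
        simp only [Set.mem_singleton_iff] at hmem
        omega
    · intro m hw hminw
      have hper : HasPer r s a (m + 1) := hasper_of_witness r s hw
      have hminp : ∀ q, 0 < q → HasPer r s a q → m + 1 ≤ q := by
        intro q hq hq'
        have h2 := hminw (q - 1)
          (witness_of_hasper r s (by rwa [Nat.sub_add_cancel hq]))
        omega
      ext z
      simp only [Set.mem_setOf_eq]
      constructor
      · intro hz
        rw [per_inr_iff] at hz
        obtain ⟨k, l, rfl, hkl⟩ := hz
        rcases lt_trichotomy k l with h | h | h
        · have hper' : HasPer r s a (l - k) :=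
            hasper_of_shift r s (fun i => (hkl i).symm) h
          have hdvd := dvd_of_min r s (Nat.succ_pos m) hper hminp (l - k) (by omega) hper'
          have hd2 : ((m : ℤ) + 1) ∣ ((l : ℤ) - k) := by
            have h5 : ((m + 1 : ℕ) : ℤ) ∣ (((l - k : ℕ)) : ℤ) :=
              Int.natCast_dvd_natCast.mpr hdvd
            have h6 : (((l - k : ℕ)) : ℤ) = (l : ℤ) - k := by omega
            rw [h6] at h5
            exact_mod_cast h5
          have := hd2.neg_right
          rwa [neg_sub] at this
        · exact ⟨0, by omega⟩
        · have hper' : HasPer r s a (k - l) := hasper_of_shift r s hkl h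
          have hdvd := dvd_of_min r s (Nat.succ_pos m) hper hminp (k - l) (by omega) hper'
          have h5 : ((m + 1 : ℕ) : ℤ) ∣ (((k - l : ℕ)) : ℤ) :=
            Int.natCast_dvd_natCast.mpr hdvd
          have h6 : (((k - l : ℕ)) : ℤ) = (k : ℤ) - l := by omega
          rw [h6] at h5
          exact_mod_cast h5
      · rintro ⟨n, hn⟩
        obtain ⟨l, hl⟩ := hper
        rw [per_inr_iff]
        rcases le_or_gt 0 n with hn0 | hn0
        · lift n to ℕ using hn0
          refine ⟨l + n * (m + 1), l, by rw [hn]; push_cast; ring, fun i => ?_⟩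
          rw [show i + (l + n * (m + 1)) = i + l + n * (m + 1) by ring]
          exact hasper_mul r s hl n (i + l) (by omega)
        · obtain ⟨n', hn'⟩ : ∃ n' : ℕ, n = -(n' : ℤ) := ⟨(-n).toNat, by omega⟩
          refine ⟨l, l + n' * (m + 1), by rw [hn, hn']; push_cast; ring, fun i => ?_⟩
          rw [show i + (l + n' * (m + 1)) = i + l + n' * (m + 1) by ring]
          exact (hasper_mul r s hl n' (i + l) (by omega)).symm

end AuxPer

/-- A boundary path has nontrivial periodicity group iff it is eventually
cyclic, i.e. of the form `b c^∞` for a cycle `c` and an exit `b` of `c`; moreover, for `c`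
chosen of minimal length, `Per(a) = |c| ℤ`. -/
theorem stmt11 {V E : Type u} (r s : E → V) [TopologicalSpace V] [TopologicalSpace E]
    [T2Space V] [T2Space E] [LocallyCompactSpace V] [LocallyCompactSpace E]
    (hr : Continuous r) (hs : IsLocalHomeomorph s) (x : BPath r s) :
    (Per r s x.val ≠ {0} ↔ ∃ m : ℕ, EvCyclicWitness r s x.val m) ∧
    (∀ m : ℕ, EvCyclicWitness r s x.val m →
      (∀ m' : ℕ, EvCyclicWitness r s x.val m' → m ≤ m') →
      Per r s x.val = {z : ℤ | ((m : ℤ) + 1) ∣ z}) := by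
  exact main_aux r s x.val

end TopGraph
end

section
/- Let E be a topological graph. The graph groupoid 𝒢_E = { (a, k−l, b) : k, l ≥ 0, k ≤ |a|, l ≤ |b|, σᵏ(a) = σˡ(b) } is principal (all isotropy groups are trivial) if and only if E contains no cycles. -/
open MeasureTheory Set

namespace TopGraph

universe u
variable {V E : Type u} (r s : E → V)

/-- Shift of an infinite path by `k` steps. -/
def dshift (k : ℕ) (d : PathInf r s) : PathInf r s :=
  ⟨fun i => d.1 (i + k), fun i => by
    show s (d.1 (i + k)) = r (d.1 (i + 1 + k))
    rw [show i + 1 + k = i + k + 1 by omega]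
    exact d.2 (i + k)⟩

lemma shiftC_iterate_inr (k : ℕ) (d : PathInf r s) :
    (shiftC r s)^[k] (Sum.inr d : BPathCarrier r s) = Sum.inr (dshift r s k d) := by
  induction k generalizing d with
  | zero => rfl
  | succ k ih =>
    exact (ih ⟨fun i => d.1 (i + 1), fun i => d.2 (i + 1)⟩).trans rfl

lemma shiftF_iterate_fst (k : ℕ) (p : FinPath r s) :
    ((shiftF r s)^[k] p).1 = p.1 - k := by
  induction k generalizing p with
  | zero => rfl
  | succ k ih =>
    rw [Function.iterate_succ_apply, ih, shiftF_fst]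
    omega

lemma shiftC_iterate_inl (k : ℕ) (p : FinPath r s) :
    (shiftC r s)^[k] (Sum.inl p : BPathCarrier r s) = Sum.inl ((shiftF r s)^[k] p) := by
  induction k generalizing p with
  | zero => rfl
  | succ k ih =>
    rw [Function.iterate_succ_apply]
    exact ih (shiftF r s p)

lemma cycle_of_periodic (d : PathInf r s) (k l : ℕ) (hkl : k < l)
    (hper : ∀ i, d.1 (i + k) = d.1 (i + l)) :
    ∃ (m : ℕ) (c : PathN r s (m + 1)), rngFin r s c = srcFin r s c := by
  refine ⟨l - k - 1, ⟨fun i => d.1 (k + i), ?_⟩, ?_⟩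
  · intro i j hij
    show s (d.1 (k + (i : ℕ))) = r (d.1 (k + (j : ℕ)))
    rw [show k + (j : ℕ) = k + (i : ℕ) + 1 by omega]
    exact d.2 (k + (i : ℕ))
  · show r (d.1 (k + 0)) = s (d.1 (k + (l - k - 1)))
    have h1 := d.2 (k + (l - k - 1))
    have h2 := hper 0
    rw [h1, show k + (l - k - 1) + 1 = 0 + l by omega, ← h2]
    rw [Nat.add_zero, Nat.zero_add]

/-- The graph groupoid `𝒢_E` is principal (trivial isotropy: `(a, z, a) ∈ 𝒢_E`
implies `z = 0`) if and only if the topological graph `E` contains no cycles. -/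
theorem stmt12 {V E : Type u} (r s : E → V) [TopologicalSpace V] [TopologicalSpace E]
    [T2Space V] [T2Space E] [LocallyCompactSpace V] [LocallyCompactSpace E]
    (hr : Continuous r) (hs : IsLocalHomeomorph s) :
    (∀ (a : BPath r s) (z : ℤ), (a, z, a) ∈ GraphGpd r s → z = 0) ↔
      ¬ ∃ (m : ℕ) (c : PathN r s (m + 1)), rngFin r s c = srcFin r s c := by
  constructor
  · rintro hpr ⟨m, c, hc⟩
    set x : BPath r s := ⟨Sum.inr (cycInf r s c hc), fun p hp => by simp at hp⟩ with hx
    have hmem : (x, ((m + 1 : ℕ) : ℤ), x) ∈ GraphGpd r s := by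
      refine ⟨m + 1, 0, le_top, le_top, by push_cast; ring, ?_⟩
      rw [Function.iterate_zero_apply]
      show (shiftC r s)^[m + 1] (Sum.inr (cycInf r s c hc)) = Sum.inr (cycInf r s c hc)
      rw [shiftC_iterate_inr]
      congr 1
      apply Subtype.ext
      funext i
      show c.1 ⟨(i + (m + 1)) % (m + 1), _⟩ = c.1 ⟨i % (m + 1), _⟩
      simp only [Nat.add_mod_right]
    have := hpr x ((m + 1 : ℕ) : ℤ) hmem
    omega
  · rintro hnc a z ⟨k, l, hk, hl, hz, heq⟩
    have hz' : z = (k : ℤ) - (l : ℤ) := hz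
    rcases hval : a.val with p | d
    · rw [hval] at hk hl heq
      simp only [blen, Nat.cast_le] at hk hl
      rw [shiftC_iterate_inl, shiftC_iterate_inl] at heq
      have hfst : ((shiftF r s)^[k] p).1 = ((shiftF r s)^[l] p).1 := by
        replace heq := Sum.inl.inj heq
        rw [heq]
      rw [shiftF_iterate_fst, shiftF_iterate_fst] at hfst
      omega
    · rw [hval] at heq
      rw [shiftC_iterate_inr, shiftC_iterate_inr] at heq
      replace heq := Sum.inr.inj heq
      have hper : ∀ i, d.1 (i + k) = d.1 (i + l) := fun i =>
        congrFun (congrArg Subtype.val heq) i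
      rcases lt_trichotomy k l with h | h | h
      · exact absurd (cycle_of_periodic r s d k l h hper) hnc
      · omega
      · exact absurd (cycle_of_periodic r s d l k h (fun i => (hper i).symm)) hnc

end TopGraph
end
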